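/- arXiv:1811.11642 — 6 statements merged into one kernel-verified Lean document; each statement's English description precedes it below -/
import Mathlib

section
/- For every μ > 0, setting λ = μ^{−4}: if cos(μ)·cosh(μ) + 1 = 0, then there exists a four times continuously differentiable function u : ℝ → ℝ, not identically zero on [0,1], with λ·u''''(t) − u(t) = 0 for all t ∈ (0,1), u(1) = u'(1) = 0, and u''(0) = u'''(0) = 0. -/
open Real

/-- General element of the kernel of `d⁴/dt⁴ - μ⁴`. -/
noncomputable def Fker (c1 c2 c3 c4 μ : ℝ) : ℝ → ℝ :=
  fun t => c1 * Real.cos (μ * t) + c2 * Real.sin (μ * t)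
    + c3 * Real.cosh (μ * t) + c4 * Real.sinh (μ * t)

lemma hasDerivAt_Fker (c1 c2 c3 c4 μ t : ℝ) :
    HasDerivAt (Fker c1 c2 c3 c4 μ) (Fker (μ * c2) (-(μ * c1)) (μ * c4) (μ * c3) μ t) t := by
  have hl : HasDerivAt (fun s : ℝ => μ * s) μ t := by
    simpa using (hasDerivAt_id t).const_mul μ
  have h1 := ((Real.hasDerivAt_cos (μ * t)).comp t hl).const_mul c1
  have h2 := ((Real.hasDerivAt_sin (μ * t)).comp t hl).const_mul c2
  have h3 := ((Real.hasDerivAt_cosh (μ * t)).comp t hl).const_mul c3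
  have h4 := ((Real.hasDerivAt_sinh (μ * t)).comp t hl).const_mul c4
  have := ((h1.add h2).add h3).add h4
  refine this.congr_deriv ?_
  unfold Fker
  ring

lemma deriv_Fker (c1 c2 c3 c4 μ : ℝ) :
    deriv (Fker c1 c2 c3 c4 μ) = Fker (μ * c2) (-(μ * c1)) (μ * c4) (μ * c3) μ := by
  funext t
  exact (hasDerivAt_Fker c1 c2 c3 c4 μ t).deriv

lemma contDiff_Fker (c1 c2 c3 c4 μ : ℝ) (n : ℕ∞) : ContDiff ℝ n (Fker c1 c2 c3 c4 μ) := by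
  unfold Fker
  have hl : ContDiff ℝ n (fun t : ℝ => μ * t) := contDiff_const.mul contDiff_id
  exact (((contDiff_const.mul (Real.contDiff_cos.comp hl)).add
      (contDiff_const.mul (Real.contDiff_sin.comp hl))).add
      (contDiff_const.mul (Real.contDiff_cosh.comp hl))).add
      (contDiff_const.mul (Real.contDiff_sinh.comp hl))

lemma iter4_Fker (c1 c2 c3 c4 μ : ℝ) :
    deriv^[4] (Fker c1 c2 c3 c4 μ)
      = Fker (μ ^ 4 * c1) (μ ^ 4 * c2) (μ ^ 4 * c3) (μ ^ 4 * c4) μ := by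
  simp only [Function.iterate_succ, Function.iterate_zero, Function.comp_apply,
    Function.comp_def, id_eq]
  rw [deriv_Fker, deriv_Fker, deriv_Fker, deriv_Fker]
  funext t
  unfold Fker
  ring

/-- Converse direction: for μ > 0 with cos(μ)·cosh(μ) + 1 = 0 there exists, with
λ = μ⁻⁴, a four times continuously differentiable u, not identically zero on [0,1],
with λu'''' − u = 0 on (0,1), u(1) = u'(1) = 0 and u''(0) = u'''(0) = 0. -/
theorem twofold_BVP_transcendental_equation_converse (μ : ℝ) (hμ : 0 < μ)
    (h : Real.cos μ * Real.cosh μ + 1 = 0) :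
    ∃ u : ℝ → ℝ, ContDiff ℝ 4 u ∧
      (∃ t ∈ Set.Icc (0 : ℝ) 1, u t ≠ 0) ∧
      (∀ t ∈ Set.Ioo (0 : ℝ) 1, (1 / μ ^ 4) * (deriv^[4] u) t - u t = 0) ∧
      u 1 = 0 ∧ deriv u 1 = 0 ∧
      deriv (deriv u) 0 = 0 ∧ deriv (deriv (deriv u)) 0 = 0 := by
  set a : ℝ := Real.sin μ + Real.sinh μ with ha
  set b : ℝ := Real.cos μ + Real.cosh μ with hb
  refine ⟨Fker a (-b) a (-b) μ, contDiff_Fker _ _ _ _ _ _, ?_, ?_, ?_, ?_, ?_, ?_⟩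
  · -- not identically zero: value at 0 is 2(sin μ + sinh μ) > 0
    refine ⟨0, by constructor <;> norm_num, ?_⟩
    have hapos : 0 < a := by
      have hs : μ < Real.sinh μ := Real.self_lt_sinh_iff.mpr hμ
      rcases le_or_gt 1 μ with hμ1 | hμ1
      · have := Real.neg_one_le_sin μ
        rw [ha]; linarith
      · have hsin : 0 < Real.sin μ := Real.sin_pos_of_pos_of_lt_pi hμ
          (lt_trans hμ1 (by linarith [Real.pi_gt_three]))
        rw [ha]; linarith
    unfold Fker
    simp only [mul_zero, Real.cos_zero, Real.sin_zero, Real.cosh_zero, Real.sinh_zero]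
    intro hc
    nlinarith
  · -- ODE
    intro t _
    rw [iter4_Fker]
    unfold Fker
    have hμ4 : (μ : ℝ) ^ 4 ≠ 0 := by positivity
    field_simp
    ring
  · -- u 1 = 0
    unfold Fker
    rw [mul_one, ha, hb]
    ring
  · -- u' 1 = 0
    rw [deriv_Fker]
    unfold Fker
    rw [mul_one, ha, hb]
    linear_combination (-2 * μ) * h - μ * Real.sin_sq_add_cos_sq μ
      - μ * Real.cosh_sq_sub_sinh_sq μ
  · -- u'' 0 = 0
    rw [deriv_Fker, deriv_Fker]
    unfold Fker
    simp only [mul_zero, Real.cos_zero, Real.sin_zero, Real.cosh_zero, Real.sinh_zero]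
    ring
  · -- u''' 0 = 0
    rw [deriv_Fker, deriv_Fker, deriv_Fker]
    unfold Fker
    simp only [mul_zero, Real.cos_zero, Real.sin_zero, Real.cosh_zero, Real.sinh_zero]
    ring
end

section
/- Let f(z) = cos(z)·cosh(z) + 1 and, for an integer i ≥ 1, let ζ_i = (i − 1/2)π. If i is odd, then f has a zero in the open interval (ζ_i, ζ_i + 1/cosh(ζ_i)); in particular f has a zero z with 0 < z − ζ_i < 2·e^{−ζ_i}. -/
open Real

lemma cosh_ge_one_add_sq (x : ℝ) (hx : 0 ≤ x) : 1 + x ^ 2 / 2 ≤ Real.cosh x := by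
  have h : Real.cosh x = Real.cosh (x/2) ^ 2 + Real.sinh (x/2) ^ 2 := by
    rw [← Real.cosh_two_mul]; ring_nf
  have h1 : x / 2 ≤ Real.sinh (x/2) := Real.self_le_sinh_iff.mpr (by linarith)
  have h2 : Real.cosh (x/2) ^ 2 = Real.sinh (x/2) ^ 2 + 1 := Real.cosh_sq _
  nlinarith [sq_nonneg (Real.sinh (x/2) - x/2)]

set_option maxHeartbeats 1000000 in
/-- For odd i ≥ 1 and ζ_i = (i − 1/2)π, the function f(z) = cos(z)cosh(z) + 1 has a
zero in the open interval (ζ_i, ζ_i + 1/cosh(ζ_i)); in particular it has a zero z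
with 0 < z − ζ_i < 2e^{−ζ_i}. -/
theorem zero_of_cos_cosh_add_one_odd (i : ℕ) (hi : 1 ≤ i) (hodd : Odd i) :
    ∃ z : ℝ, Real.cos z * Real.cosh z + 1 = 0 ∧
      ((i : ℝ) - 1 / 2) * π < z ∧
      z < ((i : ℝ) - 1 / 2) * π + 1 / Real.cosh (((i : ℝ) - 1 / 2) * π) ∧
      0 < z - ((i : ℝ) - 1 / 2) * π ∧
      z - ((i : ℝ) - 1 / 2) * π < 2 * Real.exp (-(((i : ℝ) - 1 / 2) * π)) := by
  obtain ⟨k, hk⟩ := hodd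
  set ζ : ℝ := ((i : ℝ) - 1 / 2) * π with hζdef
  have hζ : ζ = π/2 + (k : ℕ) * (2 * π) := by
    rw [hζdef, hk]; push_cast; ring
  have hπ := Real.pi_pos
  have hζpos : 0 < ζ := by
    rw [hζ]; positivity
  have hcos : Real.cos ζ = 0 := by
    rw [hζ, Real.cos_add_nat_mul_two_pi, Real.cos_pi_div_two]
  have hsin : Real.sin ζ = 1 := by
    rw [hζ, Real.sin_add_nat_mul_two_pi, Real.sin_pi_div_two]
  set δ : ℝ := 1 / Real.cosh ζ with hδdef
  have hcosh_pos : 0 < Real.cosh ζ := Real.cosh_pos ζ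
  have hcosh_gt : 1 < Real.cosh ζ := Real.one_lt_cosh.mpr (ne_of_gt hζpos)
  have hδpos : 0 < δ := by positivity
  have hδlt : δ < 1 := by
    rw [hδdef, div_lt_one hcosh_pos]; exact hcosh_gt
  have hδltπ : δ < π := by linarith [Real.pi_gt_three]
  have hδcosh : δ * Real.cosh ζ = 1 := by
    rw [hδdef]; field_simp
  -- value at right endpoint is negative
  have hsin_lb : δ - δ ^ 3 / 4 < Real.sin δ := by
    have := Real.sin_gt_sub_cube hδpos; linarith [pow_pos hδpos 3]
  have hcoshδ : 1 + δ ^ 2 / 2 ≤ Real.cosh δ := cosh_ge_one_add_sq δ hδpos.le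
  have hcosh_add : Real.cosh (ζ + δ) = Real.cosh ζ * Real.cosh δ + Real.sinh ζ * Real.sinh δ :=
    Real.cosh_add ζ δ
  have hsinh1 : 0 ≤ Real.sinh ζ := Real.sinh_nonneg_iff.mpr hζpos.le
  have hsinh2 : 0 ≤ Real.sinh δ := Real.sinh_nonneg_iff.mpr hδpos.le
  have hcoshb : Real.cosh ζ * Real.cosh δ ≤ Real.cosh (ζ + δ) := by nlinarith
  have hcosb : Real.cos (ζ + δ) = - Real.sin δ := by
    rw [Real.cos_add, hcos, hsin]; ring
  have hsinpos : 0 < Real.sin δ := Real.sin_pos_of_pos_of_lt_pi hδpos hδltπ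
  have hs : 0 < δ - δ ^ 3 / 4 := by nlinarith
  have hA : (δ - δ ^ 3 / 4) * (Real.cosh ζ * (1 + δ ^ 2 / 2)) ≤
      Real.sin δ * (Real.cosh ζ * Real.cosh δ) :=
    mul_le_mul hsin_lb.le (mul_le_mul_of_nonneg_left hcoshδ hcosh_pos.le)
      (by positivity) hsinpos.le
  have hB : Real.sin δ * (Real.cosh ζ * Real.cosh δ) ≤ Real.sin δ * Real.cosh (ζ + δ) :=
    mul_le_mul_of_nonneg_left hcoshb hsinpos.le
  have h2 : (δ - δ ^ 3 / 4) * (Real.cosh ζ * (1 + δ ^ 2 / 2)) =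
      (δ * Real.cosh ζ) * ((1 - δ ^ 2 / 4) * (1 + δ ^ 2 / 2)) := by ring
  rw [hδcosh, one_mul] at h2
  have hprod : (1 : ℝ) < (1 - δ ^ 2 / 4) * (1 + δ ^ 2 / 2) := by nlinarith
  have hkey : 1 < Real.sin δ * Real.cosh (ζ + δ) := by linarith
  have hfb : Real.cos (ζ + δ) * Real.cosh (ζ + δ) + 1 < 0 := by
    rw [hcosb]; nlinarith
  have hfa : Real.cos ζ * Real.cosh ζ + 1 = 1 := by rw [hcos]; ring
  -- IVT
  have hcont : ContinuousOn (fun z => Real.cos z * Real.cosh z + 1) (Set.Icc ζ (ζ + δ)) := by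
    fun_prop
  have hsub := intermediate_value_Ioo' (by linarith : ζ ≤ ζ + δ) hcont
  have h0mem : (0 : ℝ) ∈ Set.Ioo (Real.cos (ζ + δ) * Real.cosh (ζ + δ) + 1)
      (Real.cos ζ * Real.cosh ζ + 1) := by
    constructor
    · exact hfb
    · rw [hfa]; norm_num
  obtain ⟨z, hz, hz0⟩ := hsub h0mem
  refine ⟨z, hz0, hz.1, hz.2, by linarith [hz.1], ?_⟩
  have hexp : Real.exp ζ / 2 < Real.cosh ζ := by
    rw [Real.cosh_eq]
    have := Real.exp_pos (-ζ)
    linarith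
  have h2e : δ < 2 * Real.exp (-ζ) := by
    have h1 : Real.exp ζ * Real.exp (-ζ) = 1 := by rw [← Real.exp_add]; simp
    nlinarith [Real.exp_pos (-ζ), Real.exp_pos ζ]
  linarith [hz.2]
end

section
/- Let f(z) = cos(z)·cosh(z) + 1 and, for an integer i ≥ 2, let ζ_i = (i − 1/2)π. If i is even, then f has a zero in the open interval (ζ_i − 4·e^{−ζ_i}, ζ_i). -/
open Real

lemma aux_poly_bound (x : ℝ) (h0 : 0 < x) (h1 : x < 1/13) :
    1 < (4 - x ^ 2) * (1 - x) / 2 := by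
  nlinarith [pow_pos h0 3, sq_nonneg x]

/-- For even i ≥ 2 and ζ_i = (i − 1/2)π, the function f(z) = cos(z)cosh(z) + 1 has a
zero in the open interval (ζ_i − 4e^{−ζ_i}, ζ_i). -/
theorem zero_of_cos_cosh_add_one_even (i : ℕ) (hi : 2 ≤ i) (heven : Even i) :
    ∃ z : ℝ, Real.cos z * Real.cosh z + 1 = 0 ∧
      ((i : ℝ) - 1 / 2) * π - 4 * Real.exp (-(((i : ℝ) - 1 / 2) * π)) < z ∧
      z < ((i : ℝ) - 1 / 2) * π := by
  obtain ⟨k, hk⟩ := heven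
  set ζ : ℝ := ((i : ℝ) - 1 / 2) * π with hζ
  set δ : ℝ := 4 * Real.exp (-ζ) with hδ
  have hπ : (3 : ℝ) < π := Real.pi_gt_three
  have hi2 : (2 : ℝ) ≤ (i : ℝ) := by exact_mod_cast hi
  have hζ4 : (4 : ℝ) ≤ ζ := by
    have : (3/2 : ℝ) ≤ (i : ℝ) - 1/2 := by linarith
    nlinarith
  have hexpζpos : 0 < Real.exp ζ := Real.exp_pos _
  have hδpos : 0 < δ := by positivity
  -- bound on δ
  have hexp4 : (53 : ℝ) < Real.exp 4 := by
    have h1 : Real.exp 4 = (Real.exp 1) ^ (4 : ℕ) := by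
      rw [← Real.exp_nat_mul]; norm_num
    have h2 : (2.7182818283 : ℝ) < Real.exp 1 := Real.exp_one_gt_d9
    calc (53:ℝ) < 2.7 ^ 4 := by norm_num
      _ ≤ (Real.exp 1) ^ 4 := by gcongr; linarith
      _ = Real.exp 4 := h1.symm
  have hδsmall : δ < 1 / 13 := by
    have h1 : Real.exp (-ζ) ≤ Real.exp (-4 : ℝ) := Real.exp_le_exp.2 (by linarith)
    have h2 : Real.exp (-4 : ℝ) = (Real.exp 4)⁻¹ := by
      rw [← Real.exp_neg]
    have h3 : (Real.exp 4)⁻¹ < 1/53 := by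
      rw [inv_lt_iff_one_lt_mul₀ (by positivity)]
      nlinarith
    rw [hδ]
    nlinarith
  have hδ1 : δ ≤ 1 := by linarith
  -- value at right endpoint
  have hcosζ : Real.cos ζ = 0 := by
    have : ζ = (i : ℝ) * π - π / 2 := by rw [hζ]; ring
    rw [this, Real.cos_sub_pi_div_two, Real.sin_nat_mul_pi]
  -- value of cos at left endpoint
  have hcosa : Real.cos (ζ - δ) = -Real.sin δ := by
    have hik : (i : ℝ) = 2 * (k : ℝ) := by rw [hk]; push_cast; ring
    have h1 : ζ - δ = -(π / 2 + δ) + (k : ℝ) * (2 * π) := by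
      rw [hζ, hik]; ring
    rw [h1, Real.cos_add_nat_mul_two_pi, Real.cos_neg, Real.cos_add]
    simp
  -- δ * exp ζ = 4
  have hprod : δ * Real.exp ζ = 4 := by
    rw [hδ, mul_assoc, ← Real.exp_add]
    simp
  -- sin δ lower bound
  have hsin : δ - δ ^ 3 / 4 < Real.sin δ := by
    have := Real.sin_gt_sub_cube hδpos; linarith [pow_pos hδpos 3]
  have hsq : δ ^ 2 ≤ 1 := by nlinarith
  have hcube : δ ^ 3 ≤ δ := by nlinarith [mul_le_mul_of_nonneg_left hsq hδpos.le]
  have hsinpos : 0 < Real.sin δ := by nlinarith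
  -- cosh lower bound
  have hcosh : Real.exp ζ * (1 - δ) / 2 ≤ Real.cosh (ζ - δ) := by
    have h1 : Real.cosh (ζ - δ) = (Real.exp (ζ - δ) + Real.exp (-(ζ - δ))) / 2 :=
      Real.cosh_eq _
    have h2 : Real.exp (ζ - δ) = Real.exp ζ * Real.exp (-δ) := by
      rw [← Real.exp_add]; ring_nf
    have h3 : 1 - δ ≤ Real.exp (-δ) := by
      have := Real.add_one_le_exp (-δ)
      linarith
    have h4 : 0 < Real.exp (-(ζ - δ)) := Real.exp_pos _
    rw [h1, h2]
    nlinarith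
  -- key inequality : f (ζ - δ) < 0
  have hkey : 1 < Real.sin δ * Real.cosh (ζ - δ) := by
    have hfac : 0 ≤ δ - δ ^ 3 / 4 := by linarith
    have h1 : (δ - δ ^ 3 / 4) * (Real.exp ζ * (1 - δ) / 2)
        ≤ Real.sin δ * Real.cosh (ζ - δ) := by
      apply mul_le_mul (le_of_lt hsin) hcosh _ (le_of_lt hsinpos)
      nlinarith
    have h2 : (δ - δ ^ 3 / 4) * (Real.exp ζ * (1 - δ) / 2) = (4 - δ ^ 2) * (1 - δ) / 2 := by
      linear_combination ((1 - δ) * (1 - δ ^ 2 / 4) / 2) * hprod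
    rw [h2] at h1
    linarith [aux_poly_bound δ hδpos hδsmall]
  have hfa : Real.cos (ζ - δ) * Real.cosh (ζ - δ) + 1 < 0 := by
    rw [hcosa, neg_mul]; linarith
  have hfb : Real.cos ζ * Real.cosh ζ + 1 = 1 := by rw [hcosζ]; ring
  -- IVT
  have hcont : ContinuousOn (fun z : ℝ => Real.cos z * Real.cosh z + 1)
      (Set.Icc (ζ - δ) ζ) := by fun_prop
  have hsub := intermediate_value_Ioo (a := ζ - δ) (b := ζ)
    (f := fun z : ℝ => Real.cos z * Real.cosh z + 1) (by linarith) hcont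
  have h0 : (0 : ℝ) ∈ Set.Ioo (Real.cos (ζ - δ) * Real.cosh (ζ - δ) + 1)
      (Real.cos ζ * Real.cosh ζ + 1) := by
    constructor
    · exact hfa
    · rw [hfb]; norm_num
  obtain ⟨z, hz, hfz⟩ := hsub h0
  exact ⟨z, hfz, hz.1, hz.2⟩
end

section
/- For every real x with 0 < x ≤ e^{−3π/2}, one has (sin(4x)/(2x))·e^{−4x} > 1; equivalently, sin(4x)·e^{−4x} > 2x on this interval. -/
open Real

/-- For 0 < x ≤ e^{−3π/2} one has (sin(4x)/(2x))·e^{−4x} > 1; equivalently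
sin(4x)·e^{−4x} > 2x on this interval. -/
theorem h_gt_one (x : ℝ) (hx0 : 0 < x) (hx : x ≤ Real.exp (-(3 * π / 2))) :
    1 < (Real.sin (4 * x) / (2 * x)) * Real.exp (-(4 * x)) ∧
    2 * x < Real.sin (4 * x) * Real.exp (-(4 * x)) := by
  have hpi : (3:ℝ) ≤ π := by
    nlinarith [Real.pi_gt_d6]
  have hexp4 : Real.exp (-(3 * π / 2)) ≤ Real.exp (-4) := by
    apply Real.exp_le_exp.mpr; nlinarith
  have h50 : (50:ℝ) < Real.exp 4 := by
    have h1 : (2.7182818283:ℝ) < Real.exp 1 := Real.exp_one_gt_d9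
    have : Real.exp 4 = (Real.exp 1)^4 := by
      rw [← Real.exp_nat_mul]; norm_num
    have h2 : (7.29:ℝ) < (Real.exp 1)^2 := by nlinarith
    rw [this]; nlinarith [sq_nonneg ((Real.exp 1)^2 - 7.29)]
  have hx50 : x ≤ 1/50 := by
    have : Real.exp (-4) = 1 / Real.exp 4 := by
      rw [Real.exp_neg]; ring
    have h2 : Real.exp (-4) ≤ 1/50 := by
      rw [this]
      apply div_le_div_of_nonneg_left (by norm_num) (by norm_num) (le_of_lt h50)
    linarith
  set t := 4 * x with ht
  have ht0 : 0 < t := by positivity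
  have ht1 : t ≤ 2/25 := by rw [ht]; linarith
  have hsin : t - t^3/4 < Real.sin t := by have := Real.sin_gt_sub_cube ht0; linarith [pow_pos ht0 3]
  have hexp : 1 - t ≤ Real.exp (-t) := by
    have := Real.add_one_le_exp (-t); linarith
  have ht2 : t^2 ≤ (2/25)^2 := by nlinarith
  have ht3 : t^3 ≤ (2/25)^2 * t := by nlinarith [mul_le_mul_of_nonneg_right ht2 ht0.le]
  have hcube : 0 < t - t^3/4 := by nlinarith
  have h1t : 0 < 1 - t := by linarith
  have key : 2 * x < Real.sin t * Real.exp (-t) := by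
    have : (t - t^3/4) * (1 - t) ≤ Real.sin t * Real.exp (-t) := by
      apply mul_le_mul (le_of_lt hsin) hexp (le_of_lt h1t) (le_of_lt (lt_trans hcube hsin))
    nlinarith [mul_le_mul_of_nonneg_right ht3 h1t.le]
  refine ⟨?_, key⟩
  have h2x : 0 < 2 * x := by linarith
  rw [div_mul_eq_mul_div, lt_div_iff₀ h2x, one_mul]
  exact key
end

section
/- Let n ≥ 1 be an integer. For every z ∈ ℂ, det(A_n(z)) = z^{n(2n−1)} · ∑_{I ⊆ {0,…,2n−1}, |I| = n} c_I · cosh(α_I·z) · cos(β_I·z), where the sum runs over all n-element subsets I of {0,…,2n−1}. -/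
open Real Complex Finset

/-- ω_k = exp(iπ(2k + [n]₂)/(2n)). -/
noncomputable def omegaRoot (n k : ℕ) : ℂ :=
  Complex.exp (Complex.I * (Real.pi : ℂ) * (2 * (k : ℂ) + ((n % 2 : ℕ) : ℂ)) / (2 * (n : ℂ)))

/-- Vandermonde-type product ∏_{k,ℓ ∈ I, k<ℓ} (ω_ℓ − ω_k). -/
noncomputable def vdmProd (n : ℕ) (I : Finset ℕ) : ℂ :=
  ∏ p ∈ (I ×ˢ I).filter (fun p => p.1 < p.2), (omegaRoot n p.2 - omegaRoot n p.1)

/-- c_I = (−1)^{n(n+1)/2} · i^{[n]₂·n} · ∏_{k<ℓ∈I}(ω_ℓ−ω_k) · ∏_{k<ℓ∈C}(ω_ℓ−ω_k),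
where C = {0,…,2n−1} \ I. -/
noncomputable def cCoeff (n : ℕ) (I : Finset ℕ) : ℂ :=
  (-1) ^ (n * (n + 1) / 2) * Complex.I ^ ((n % 2) * n) *
    vdmProd n I * vdmProd n (Finset.range (2 * n) \ I)

/-- The matrix A_n(z) with entries ω_k^j z^j e^{ω_k z} for j < n and ω_k^j z^j for
j ≥ n. -/
noncomputable def An (n : ℕ) (z : ℂ) : Matrix (Fin (2 * n)) (Fin (2 * n)) ℂ :=
  Matrix.of (fun j k : Fin (2 * n) =>
    if (j : ℕ) < n then omegaRoot n k ^ (j : ℕ) * z ^ (j : ℕ) * Complex.exp (omegaRoot n k * z)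
    else omegaRoot n k ^ (j : ℕ) * z ^ (j : ℕ))

namespace DetAnAux

open Equiv

lemma omega_ne_zero (n k : ℕ) : omegaRoot n k ≠ 0 := Complex.exp_ne_zero _

lemma exp_pi_div_two_mul_I : Complex.exp ((Real.pi : ℂ) * Complex.I / 2) = Complex.I := by
  have : (Real.pi : ℂ) * Complex.I / 2 = (((Real.pi/2 : ℝ)) : ℂ) * Complex.I := by
    push_cast; ring
  rw [this, Complex.exp_mul_I, ← Complex.ofReal_cos, ← Complex.ofReal_sin]
  simp

lemma exp_nat_pi_mul_I (k : ℕ) : Complex.exp ((k : ℂ) * ((Real.pi : ℂ) * Complex.I)) = (-1 : ℂ) ^ k := by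
  rw [Complex.exp_nat_mul, Complex.exp_pi_mul_I]

lemma exp_nat_two_pi_mul_I (k : ℕ) : Complex.exp ((k : ℂ) * (2 * (Real.pi : ℂ) * Complex.I)) = 1 := by
  rw [Complex.exp_nat_mul, Complex.exp_two_pi_mul_I, one_pow]

lemma neg_one_pow_par {M : Type*} [Monoid M] [HasDistribNeg M] {a b : ℕ} (h : a % 2 = b % 2) :
    (-1 : M) ^ a = (-1 : M) ^ b := by
  conv_lhs => rw [← Nat.div_add_mod a 2]
  conv_rhs => rw [← Nat.div_add_mod b 2]
  rw [pow_add, pow_add, pow_mul, pow_mul, neg_one_sq, one_pow, one_pow, h]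

lemma omega_pow_two_n (n : ℕ) (hn : 1 ≤ n) (k : ℕ) :
    omegaRoot n k ^ (2 * n) = (-1 : ℂ) ^ (n % 2) := by
  have hne : (n : ℂ) ≠ 0 := Nat.cast_ne_zero.mpr (by omega)
  rw [omegaRoot, ← Complex.exp_nat_mul]
  have : ((2 * n : ℕ) : ℂ) * (Complex.I * (Real.pi : ℂ) * (2 * (k : ℂ) + ((n % 2 : ℕ) : ℂ)) / (2 * (n : ℂ)))
      = (k : ℂ) * (2 * (Real.pi : ℂ) * Complex.I) + ((n % 2 : ℕ) : ℂ) * ((Real.pi : ℂ) * Complex.I) := by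
    field_simp
    push_cast; ring
  rw [this, Complex.exp_add, exp_nat_two_pi_mul_I, exp_nat_pi_mul_I, one_mul]

lemma omega_pow_n (n : ℕ) (hn : 1 ≤ n) (k : ℕ) :
    omegaRoot n k ^ n = (-1 : ℂ) ^ k * Complex.I ^ (n % 2) := by
  have hne : (n : ℂ) ≠ 0 := Nat.cast_ne_zero.mpr (by omega)
  rw [omegaRoot, ← Complex.exp_nat_mul]
  have : (n : ℂ) * (Complex.I * (Real.pi : ℂ) * (2 * (k : ℂ) + ((n % 2 : ℕ) : ℂ)) / (2 * (n : ℂ)))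
      = (k : ℂ) * ((Real.pi : ℂ) * Complex.I) + ((n % 2 : ℕ) : ℂ) * ((Real.pi : ℂ) * Complex.I / 2) := by
    field_simp
  rw [this, Complex.exp_add, exp_nat_pi_mul_I, Complex.exp_nat_mul, exp_pi_div_two_mul_I]

lemma conj_omega_mul (n k : ℕ) :
    (starRingEnd ℂ) (omegaRoot n k) * omegaRoot n k = 1 := by
  rw [omegaRoot, ← Complex.exp_conj, ← Complex.exp_add]
  have : (starRingEnd ℂ) (Complex.I * (Real.pi : ℂ) * (2 * (k : ℂ) + ((n % 2 : ℕ) : ℂ)) / (2 * (n : ℂ)))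
      = - (Complex.I * (Real.pi : ℂ) * (2 * (k : ℂ) + ((n % 2 : ℕ) : ℂ)) / (2 * (n : ℂ))) := by
    simp [map_div₀, map_ofNat]
    ring
  rw [this, neg_add_cancel, Complex.exp_zero]

lemma conj_omega_pow (n k j : ℕ) :
    (starRingEnd ℂ) (omegaRoot n k) ^ j * omegaRoot n k ^ j = 1 := by
  rw [← mul_pow, conj_omega_mul, one_pow]

lemma sum_range_two_n (n : ℕ) : ∑ k ∈ Finset.range (2 * n), k = n * (2 * n - 1) := by
  have h := Finset.sum_range_id_mul_two (2 * n)
  have h2 : 2 * n * (2 * n - 1) = n * (2 * n - 1) * 2 := by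
    rcases n with _ | k
    · simp
    · ring_nf
  omega

lemma prod_omega (n : ℕ) (hn : 1 ≤ n) :
    ∏ k ∈ Finset.range (2 * n), omegaRoot n k = (-1 : ℂ) ^ (n % 2 + 1) := by
  have hne : (n : ℂ) ≠ 0 := Nat.cast_ne_zero.mpr (by omega)
  simp only [omegaRoot]
  rw [← Complex.exp_sum]
  have h1 : ∀ k ∈ Finset.range (2 * n),
      Complex.I * (Real.pi : ℂ) * (2 * (k : ℂ) + ((n % 2 : ℕ) : ℂ)) / (2 * (n : ℂ))
      = ((2 * k + n % 2 : ℕ) : ℂ) * ((Real.pi : ℂ) * Complex.I / (2 * (n : ℂ))) := by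
    intro k _; push_cast; ring
  rw [Finset.sum_congr rfl h1, ← Finset.sum_mul, ← Nat.cast_sum]
  have h2 : ∑ k ∈ Finset.range (2 * n), (2 * k + n % 2) = 2 * n * (2 * n - 1 + n % 2) := by
    rw [Finset.sum_add_distrib, ← Finset.mul_sum, sum_range_two_n]
    rw [Finset.sum_const, Finset.card_range, smul_eq_mul]
    have : 2 * (n * (2 * n - 1)) + 2 * n * (n % 2) = 2 * n * (2 * n - 1 + n % 2) := by ring
    omega
  rw [h2]
  have h3 : ((2 * n * (2 * n - 1 + n % 2) : ℕ) : ℂ) * ((Real.pi : ℂ) * Complex.I / (2 * (n : ℂ)))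
      = ((2 * n - 1 + n % 2 : ℕ) : ℂ) * ((Real.pi : ℂ) * Complex.I) := by
    push_cast
    field_simp
  rw [h3, exp_nat_pi_mul_I]
  exact neg_one_pow_par (by omega)

lemma prod_omega_pow (n : ℕ) (hn : 1 ≤ n) (j : ℕ) :
    ∏ k ∈ Finset.range (2 * n), omegaRoot n k ^ j = ((-1 : ℂ) ^ (n % 2 + 1)) ^ j := by
  rw [Finset.prod_pow, prod_omega n hn]

lemma sum_omega (n : ℕ) (hn : 1 ≤ n) :
    ∑ k ∈ Finset.range (2 * n), omegaRoot n k = 0 := by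
  have hne : (n : ℂ) ≠ 0 := Nat.cast_ne_zero.mpr (by omega)
  have hω : ∀ k : ℕ, omegaRoot n k
      = omegaRoot n 0 * Complex.exp ((Real.pi : ℂ) * Complex.I / (n : ℂ)) ^ k := by
    intro k
    rw [omegaRoot, omegaRoot, ← Complex.exp_nat_mul, ← Complex.exp_add]
    congr 1
    field_simp
    ring
  have hπ : (Real.pi : ℂ) ≠ 0 := Complex.ofReal_ne_zero.mpr Real.pi_ne_zero
  have hI : Complex.I ≠ 0 := Complex.I_ne_zero
  have hr : Complex.exp ((Real.pi : ℂ) * Complex.I / (n : ℂ)) ≠ 1 := by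
    intro h
    rw [Complex.exp_eq_one_iff] at h
    obtain ⟨k, hk⟩ := h
    field_simp at hk
    have h1 : (Real.pi : ℂ) * Complex.I * 1 = (Real.pi : ℂ) * Complex.I * (2 * (k : ℂ) * (n : ℂ)) := by
      linear_combination ((Real.pi : ℂ) * Complex.I) * hk
    have h2 : (1 : ℂ) = 2 * (k : ℂ) * (n : ℂ) := mul_left_cancel₀ (mul_ne_zero hπ hI) h1
    have h3 : (1 : ℤ) = 2 * k * (n : ℤ) := by exact_mod_cast h2
    have h4 : (2 : ℤ) ∣ 1 := ⟨k * n, by linarith⟩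
    norm_num at h4
  calc ∑ k ∈ Finset.range (2 * n), omegaRoot n k
      = omegaRoot n 0 * ∑ k ∈ Finset.range (2 * n),
          Complex.exp ((Real.pi : ℂ) * Complex.I / (n : ℂ)) ^ k := by
        rw [Finset.mul_sum]; exact Finset.sum_congr rfl fun k _ => hω k
    _ = 0 := by
        rw [geom_sum_eq hr]
        have : Complex.exp ((Real.pi : ℂ) * Complex.I / (n : ℂ)) ^ (2 * n) = 1 := by
          rw [← Complex.exp_nat_mul]
          have : ((2 * n : ℕ) : ℂ) * ((Real.pi : ℂ) * Complex.I / (n : ℂ))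
              = 2 * (Real.pi : ℂ) * Complex.I := by field_simp; push_cast; ring
          rw [this, Complex.exp_two_pi_mul_I]
        rw [this, sub_self, zero_div, mul_zero]


lemma prod_filter_product {α β M : Type*} [DecidableEq α] [DecidableEq β] [CommMonoid M]
    (s : Finset α) (t : Finset β) (P : α → β → Prop) [∀ a b, Decidable (P a b)] (f : α → β → M) :
    ∏ p ∈ (s ×ˢ t).filter (fun p => P p.1 p.2), f p.1 p.2
      = ∏ a ∈ s, ∏ b ∈ t.filter (fun b => P a b), f a b := by
  rw [Finset.prod_filter, Finset.prod_product]
  exact Finset.prod_congr rfl fun a _ => (Finset.prod_filter _ _).symm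

lemma units_eq_of_rat {u : ℤˣ} {c : ℕ} (h : ((u : ℤ) : ℚ) = (-1) ^ c) : u = (-1) ^ c := by
  have h2 : (u : ℤ) = (((-1 : ℤˣ) ^ c : ℤˣ) : ℤ) := by push_cast; exact_mod_cast h
  exact Units.ext h2

lemma sign_revPerm_eq (N : ℕ) :
    Equiv.Perm.sign (Fin.revPerm : Equiv.Perm (Fin N)) = (-1 : ℤˣ) ^ (N * (N - 1) / 2) := by
  set v : Fin N → ℚ := fun i => (i : ℚ) with hv
  have hsub : (Matrix.vandermonde v).submatrix (Fin.revPerm : Equiv.Perm (Fin N)) id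
      = Matrix.vandermonde (fun i => v (Fin.rev i)) := rfl
  have hdet := Matrix.det_permute (Fin.revPerm : Equiv.Perm (Fin N)) (Matrix.vandermonde v)
  rw [hsub, Matrix.det_vandermonde, Matrix.det_vandermonde] at hdet
  set Q : ℚ := ∏ i : Fin N, ∏ j ∈ Finset.Ioi i, (v j - v i) with hQdef
  have hQ : Q ≠ 0 := by
    rw [hQdef]
    apply Finset.prod_ne_zero_iff.mpr
    intro i _
    apply Finset.prod_ne_zero_iff.mpr
    intro j hj
    have hij : i < j := Finset.mem_Ioi.mp hj
    have : (i : ℚ) < (j : ℚ) := by exact_mod_cast (Fin.lt_def.mp hij)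
    simp only [hv]
    exact sub_ne_zero.mpr (ne_of_gt this)
  have hL : ∏ i : Fin N, ∏ j ∈ Finset.Ioi i, (v (Fin.rev j) - v (Fin.rev i))
      = (-1 : ℚ) ^ (N * (N - 1) / 2) * Q := by
    have hfac : ∀ i : Fin N, ∀ j ∈ Finset.Ioi i, v (Fin.rev j) - v (Fin.rev i)
        = (-1) * (v j - v i) := by
      intro i j hj
      simp only [hv, Fin.val_rev]
      have h1 : (j : ℕ) + 1 ≤ N := j.isLt
      have h2 : (i : ℕ) + 1 ≤ N := i.isLt
      rw [Nat.cast_sub h1, Nat.cast_sub h2]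
      push_cast
      ring
    calc ∏ i : Fin N, ∏ j ∈ Finset.Ioi i, (v (Fin.rev j) - v (Fin.rev i))
        = ∏ i : Fin N, ∏ j ∈ Finset.Ioi i, ((-1) * (v j - v i)) := by
          exact Finset.prod_congr rfl fun i _ => Finset.prod_congr rfl (hfac i)
      _ = ∏ i : Fin N, ((-1 : ℚ) ^ (Finset.Ioi i).card * ∏ j ∈ Finset.Ioi i, (v j - v i)) := by
          exact Finset.prod_congr rfl fun i _ => by rw [Finset.prod_mul_distrib, Finset.prod_const]
      _ = (∏ i : Fin N, (-1 : ℚ) ^ (Finset.Ioi i).card) * Q := Finset.prod_mul_distrib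
      _ = (-1 : ℚ) ^ (∑ i : Fin N, (Finset.Ioi i).card) * Q := by
          rw [Finset.prod_pow_eq_pow_sum]
      _ = (-1 : ℚ) ^ (N * (N - 1) / 2) * Q := by
          congr 2
          have h1 : ∀ i : Fin N, (Finset.Ioi i).card = N - 1 - (i : ℕ) := fun i => Fin.card_Ioi i
          rw [Finset.sum_congr rfl fun i _ => h1 i]
          rw [Fin.sum_univ_eq_sum_range (fun k => N - 1 - k)]
          rw [Finset.sum_range_reflect (fun k => k) N]
          have := Finset.sum_range_id_mul_two N
          omega
  rw [hL] at hdet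
  have hu : ((Equiv.Perm.sign (Fin.revPerm : Equiv.Perm (Fin N)) : ℤ) : ℚ)
      = (-1) ^ (N * (N - 1) / 2) := by
    exact (mul_right_cancel₀ hQ hdet).symm
  exact units_eq_of_rat hu

noncomputable def kappa (n : ℕ) : Equiv.Perm (Fin (2*n)) :=
  (if n % 2 = 0 then finRotate (2*n) else 1) * Fin.revPerm

lemma finRotate_val {N : ℕ} (hN : 2 ≤ N) (x : Fin N) :
    ((finRotate N) x : ℕ) = ((x : ℕ) + 1) % N := by
  rcases N with _ | M
  · exact x.elim0
  · rw [finRotate_succ_apply, Fin.val_add]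
    have h1 : ((1 : Fin (M+1)) : ℕ) = 1 := by
      have : ((1 : Fin (M+1)) : ℕ) = 1 % (M+1) := rfl
      rw [this, Nat.mod_eq_of_lt (by omega)]
    rw [h1]

lemma sign_finRotate_two_n (n : ℕ) (hn : 1 ≤ n) :
    Equiv.Perm.sign (finRotate (2*n)) = -1 := by
  have h : 2*n - 1 + 1 = 2*n := by omega
  have hs := sign_finRotate (2*n)
  rw [hs]
  exact Odd.neg_one_pow ⟨n - 1, by omega⟩

lemma sign_kappa (n : ℕ) (hn : 1 ≤ n) :
    Equiv.Perm.sign (kappa n) = (-1 : ℤˣ) ^ (n + n % 2 + 1) := by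
  rw [kappa, map_mul, sign_revPerm_eq]
  have hexp : 2*n * (2*n - 1) / 2 = n * (2*n-1) := by
    have : 2*n*(2*n-1) = n * (2*n-1) * 2 := by ring
    omega
  rw [hexp]
  rcases Nat.even_or_odd n with he | ho
  · have hm : n % 2 = 0 := Nat.even_iff.mp he
    rw [if_pos hm, sign_finRotate_two_n n hn, hm]
    have h1 : (-1 : ℤˣ) ^ (n * (2*n-1)) = 1 := Even.neg_one_pow (he.mul_right _)
    have h2 : (-1 : ℤˣ) ^ (n + 0 + 1) = -1 := Odd.neg_one_pow (by
      rcases he with ⟨k, hk⟩; exact ⟨k, by omega⟩)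
    rw [h1, h2, mul_one]
  · have hm : n % 2 = 1 := Nat.odd_iff.mp ho
    rw [if_neg (by omega), hm, map_one, one_mul]
    have h1 : (-1 : ℤˣ) ^ (n * (2*n-1)) = -1 := Odd.neg_one_pow (ho.mul (by
      rcases ho with ⟨k, hk⟩; exact ⟨2*k, by omega⟩))
    have h2 : (-1 : ℤˣ) ^ (n + 1 + 1) = -1 := Odd.neg_one_pow (by
      rcases ho with ⟨k, hk⟩; exact ⟨k+1, by omega⟩)
    rw [h1, h2]

lemma kappa_add (n : ℕ) (hn : 1 ≤ n) (k : Fin (2*n)) :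
    ∃ c : ℕ, c ≤ 1 ∧ ((kappa n k : Fin (2*n)) : ℕ) + (k : ℕ) + n % 2 = 2*n*c := by
  rcases Nat.even_or_odd n with he | ho
  · have hm : n % 2 = 0 := Nat.even_iff.mp he
    have hk : kappa n k = finRotate (2*n) (Fin.revPerm k) := by
      rw [kappa, if_pos hm]; rfl
    have hval : ((kappa n k : Fin (2*n)) : ℕ) = ((2*n - ((k:ℕ) + 1)) + 1) % (2*n) := by
      rw [hk, finRotate_val (by omega)]
      simp [Fin.val_rev]
    rcases Nat.eq_zero_or_pos (k : ℕ) with h0 | hpos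
    · refine ⟨0, by omega, ?_⟩
      rw [hval, h0]
      have h2 : 2*n - (0+1) + 1 = 2*n := by omega
      rw [h2, Nat.mod_self]
      omega
    · refine ⟨1, le_refl 1, ?_⟩
      rw [hval]
      have hlt := k.isLt
      have h2 : 2*n - ((k:ℕ)+1) + 1 = 2*n - (k:ℕ) := by omega
      rw [h2, Nat.mod_eq_of_lt (by omega)]
      omega
  · have hm : n % 2 = 1 := Nat.odd_iff.mp ho
    have hk : kappa n k = Fin.revPerm k := by rw [kappa, if_neg (by omega)]; simp
    have hval : ((kappa n k : Fin (2*n)) : ℕ) = 2*n - ((k:ℕ)+1) := by rw [hk]; exact Fin.val_rev k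
    exact ⟨1, le_refl 1, by rw [hval, hm]; have := k.isLt; omega⟩


def eNN (n : ℕ) : Fin n ⊕ Fin n ≃ Fin (2*n) := finSumFinEquiv.trans (finCongr (two_mul n).symm)

@[simp] lemma eNN_inl_val (n : ℕ) (i : Fin n) : ((eNN n (Sum.inl i) : Fin (2*n)) : ℕ) = (i : ℕ) := by
  simp [eNN]

@[simp] lemma eNN_inr_val (n : ℕ) (i : Fin n) :
    ((eNN n (Sum.inr i) : Fin (2*n)) : ℕ) = n + (i : ℕ) := by
  simp [eNN]
  omega

lemma compl_card {n : ℕ} {s : Finset (Fin (2*n))} (hs : s.card = n) : sᶜ.card = n := by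
  rw [Finset.card_compl, hs, Fintype.card_fin]
  omega

noncomputable def unshufFun (n : ℕ) (s : Finset (Fin (2*n))) (hs : s.card = n) :
    Fin n ⊕ Fin n → Fin (2*n) :=
  Sum.elim (s.orderEmbOfFin hs) (sᶜ.orderEmbOfFin (compl_card hs))

lemma unshufFun_bij (n : ℕ) (s : Finset (Fin (2*n))) (hs : s.card = n) :
    Function.Bijective (unshufFun n s hs) := by
  rw [Function.Bijective]
  constructor
  · intro x y hxy
    rcases x with i | i <;> rcases y with j | j <;>
      simp only [unshufFun, Sum.elim_inl, Sum.elim_inr] at hxy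
    · exact congrArg Sum.inl ((s.orderEmbOfFin hs).injective hxy)
    · exfalso
      have h1 : s.orderEmbOfFin hs i ∈ s := Finset.orderEmbOfFin_mem _ _ _
      have h2 : sᶜ.orderEmbOfFin (compl_card hs) j ∈ sᶜ := Finset.orderEmbOfFin_mem _ _ _
      rw [← hxy] at h2
      exact (Finset.mem_compl.mp h2) h1
    · exfalso
      have h1 : s.orderEmbOfFin hs j ∈ s := Finset.orderEmbOfFin_mem _ _ _
      have h2 : sᶜ.orderEmbOfFin (compl_card hs) i ∈ sᶜ := Finset.orderEmbOfFin_mem _ _ _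
      rw [hxy] at h2
      exact (Finset.mem_compl.mp h2) h1
    · exact congrArg Sum.inr ((sᶜ.orderEmbOfFin (compl_card hs)).injective hxy)
  · intro x
    by_cases hx : x ∈ s
    · have : x ∈ Set.range (s.orderEmbOfFin hs) := by
        rw [Finset.range_orderEmbOfFin]; exact hx
      obtain ⟨i, hi⟩ := this
      exact ⟨Sum.inl i, hi⟩
    · have : x ∈ Set.range (sᶜ.orderEmbOfFin (compl_card hs)) := by
        rw [Finset.range_orderEmbOfFin]; exact Finset.mem_compl.mpr hx
      obtain ⟨i, hi⟩ := this
      exact ⟨Sum.inr i, hi⟩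

noncomputable def unshuffle (n : ℕ) (s : Finset (Fin (2*n))) (hs : s.card = n) :
    Equiv.Perm (Fin (2*n)) :=
  (eNN n).symm.trans (Equiv.ofBijective _ (unshufFun_bij n s hs))

lemma unshuffle_inl (n : ℕ) (s : Finset (Fin (2*n))) (hs : s.card = n) (i : Fin n) :
    unshuffle n s hs (eNN n (Sum.inl i)) = s.orderEmbOfFin hs i := by
  simp [unshuffle, unshufFun]

lemma unshuffle_inr (n : ℕ) (s : Finset (Fin (2*n))) (hs : s.card = n) (i : Fin n) :
    unshuffle n s hs (eNN n (Sum.inr i)) = sᶜ.orderEmbOfFin (compl_card hs) i := by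
  simp [unshuffle, unshufFun]

lemma exists_step {N n : ℕ} (S : Finset ℕ) (hsub : S ⊆ Finset.range N) (hcard : S.card = n)
    (hne : S ≠ Finset.range n) : ∃ k, k ∉ S ∧ k + 1 ∈ S := by
  by_contra hcon
  push_neg at hcon
  have hdc : ∀ x, x ∈ S → ∀ y, y ≤ x → y ∈ S := by
    intro x
    induction x with
    | zero => intro hx y hy; rwa [Nat.le_zero.mp hy]
    | succ m ihm =>
      intro hx y hy
      have hm : m ∈ S := by
        by_contra hmn
        exact (hcon m hmn) hx
      rcases Nat.eq_or_lt_of_le hy with h | h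
      · rwa [h]
      · exact ihm hm y (by omega)
  have hsubr : S ⊆ Finset.range n := by
    intro x hx
    rw [Finset.mem_range]
    by_contra hxn
    push_neg at hxn
    have hsub2 : Finset.range (x+1) ⊆ S := fun y hy =>
      hdc x hx y (Nat.lt_succ_iff.mp (Finset.mem_range.mp hy))
    have := Finset.card_le_card hsub2
    rw [Finset.card_range, hcard] at this
    omega
  exact hne (Finset.eq_of_subset_of_card_le hsubr (by rw [hcard, Finset.card_range]))

lemma swap_mono_insert {N : ℕ} {kf kf1 : Fin N} (hval : (kf:ℕ) + 1 = (kf1:ℕ))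
    {T : Finset (Fin N)} (hmem : kf ∈ T) (hnot : kf1 ∉ T) {x y : Fin N}
    (hx : x ∈ T) (hy : y ∈ T) (hxy : x < y) :
    Equiv.swap kf kf1 x < Equiv.swap kf kf1 y := by
  have hxne : x ≠ kf1 := fun h => hnot (h ▸ hx)
  have hyne : y ≠ kf1 := fun h => hnot (h ▸ hy)
  rw [Fin.lt_def] at hxy ⊢
  by_cases hxk : x = kf
  · have hyk : y ≠ kf := fun h => by rw [hxk, h] at hxy; omega
    rw [hxk, Equiv.swap_apply_left, Equiv.swap_apply_of_ne_of_ne hyk hyne]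
    have h1 : (y:ℕ) ≠ (kf1:ℕ) := fun h => hyne (Fin.val_injective h)
    rw [hxk] at hxy
    omega
  · by_cases hyk : y = kf
    · rw [hyk, Equiv.swap_apply_left, Equiv.swap_apply_of_ne_of_ne hxk hxne]
      rw [hyk] at hxy
      omega
    · rw [Equiv.swap_apply_of_ne_of_ne hxk hxne, Equiv.swap_apply_of_ne_of_ne hyk hyne]
      exact hxy

lemma swap_mono_erase {N : ℕ} {kf kf1 : Fin N} (hval : (kf:ℕ) + 1 = (kf1:ℕ))
    {T : Finset (Fin N)} (hmem : kf1 ∈ T) (hnot : kf ∉ T) {x y : Fin N}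
    (hx : x ∈ T) (hy : y ∈ T) (hxy : x < y) :
    Equiv.swap kf kf1 x < Equiv.swap kf kf1 y := by
  have hxne : x ≠ kf := fun h => hnot (h ▸ hx)
  have hyne : y ≠ kf := fun h => hnot (h ▸ hy)
  rw [Fin.lt_def] at hxy ⊢
  by_cases hxk : x = kf1
  · have hyk : y ≠ kf1 := fun h => by rw [hxk, h] at hxy; omega
    rw [hxk, Equiv.swap_apply_right, Equiv.swap_apply_of_ne_of_ne hyne hyk]
    have h1 : (y:ℕ) ≠ (kf:ℕ) := fun h => hyne (Fin.val_injective h)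
    rw [hxk] at hxy
    omega
  · by_cases hyk : y = kf1
    · rw [hyk, Equiv.swap_apply_right, Equiv.swap_apply_of_ne_of_ne hxne hxk]
      rw [hyk] at hxy
      have h1 : (x:ℕ) ≠ (kf:ℕ) := fun h => hxne (Fin.val_injective h)
      omega
    · rw [Equiv.swap_apply_of_ne_of_ne hxne hxk, Equiv.swap_apply_of_ne_of_ne hyne hyk]
      exact hxy


lemma sign_unshuffle_aux (n : ℕ) (hn : 1 ≤ n) :
    ∀ (t : ℕ) (s : Finset (Fin (2*n))) (hs : s.card = n), (∑ k ∈ s, (k:ℕ)) = t →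
    Equiv.Perm.sign (unshuffle n s hs) = (-1:ℤˣ) ^ ((∑ k ∈ s, (k:ℕ)) + n*(n-1)/2) := by
  intro t
  induction t using Nat.strong_induction_on with
  | _ t ih =>
    intro s hs hsum
    by_cases hbase : s.image Fin.val = Finset.range n
    · -- base case: s = {0, ..., n-1}
      have hmemlow : ∀ x : Fin (2*n), x ∈ s ↔ (x:ℕ) < n := by
        intro x
        constructor
        · intro hx
          have : (x:ℕ) ∈ s.image Fin.val := Finset.mem_image_of_mem _ hx
          rw [hbase, Finset.mem_range] at this
          exact this
        · intro hx
          have : (x:ℕ) ∈ Finset.range n := Finset.mem_range.mpr hx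
          rw [← hbase, Finset.mem_image] at this
          obtain ⟨y, hy, hyx⟩ := this
          rwa [← Fin.val_injective hyx]
      have hsumval : (∑ k ∈ s, (k:ℕ)) = n*(n-1)/2 := by
        have h1 : ∑ x ∈ s.image Fin.val, x = ∑ k ∈ s, (k:ℕ) :=
          Finset.sum_image (fun x _ y _ h => Fin.val_injective h)
        rw [← h1, hbase]
        have := Finset.sum_range_id_mul_two n
        omega
      have hid : unshuffle n s hs = 1 := by
        have hf : (fun i : Fin n => eNN n (Sum.inl i)) = ⇑(s.orderEmbOfFin hs) := by
          apply Finset.orderEmbOfFin_unique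
          · intro i
            rw [hmemlow]
            rw [eNN_inl_val]
            exact i.isLt
          · intro a b hab
            rw [Fin.lt_def, eNN_inl_val, eNN_inl_val]
            exact hab
        have hg : (fun i : Fin n => eNN n (Sum.inr i)) = ⇑(sᶜ.orderEmbOfFin (compl_card hs)) := by
          apply Finset.orderEmbOfFin_unique
          · intro i
            rw [Finset.mem_compl, hmemlow, eNN_inr_val]
            omega
          · intro a b hab
            rw [Fin.lt_def, eNN_inr_val, eNN_inr_val]
            exact Nat.add_lt_add_left hab n
        apply Equiv.ext
        intro x
        obtain ⟨y, rfl⟩ := (eNN n).surjective x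
        rcases y with i | i
        · rw [unshuffle_inl, ← hf]
          rfl
        · rw [unshuffle_inr, ← hg]
          rfl
      rw [hid, hsumval, map_one]
      have : (-1:ℤˣ) ^ (n*(n-1)/2 + n*(n-1)/2) = ((-1:ℤˣ) ^ (n*(n-1)/2))^2 := by
        rw [← pow_mul]
        congr 1
        ring
      rw [this]
      rcases Int.units_eq_one_or ((-1:ℤˣ) ^ (n*(n-1)/2)) with h | h <;> rw [h] <;> decide
    · -- inductive step
      have himsub : s.image Fin.val ⊆ Finset.range (2*n) := by
        intro x hx
        rw [Finset.mem_image] at hx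
        obtain ⟨y, _, rfl⟩ := hx
        exact Finset.mem_range.mpr y.isLt
      obtain ⟨k, hk_not, hk1_in⟩ := exists_step (s.image Fin.val) himsub
        (by rw [Finset.card_image_of_injective _ Fin.val_injective, hs]) hbase
      have hk1lt : k + 1 < 2*n := by
        have := himsub hk1_in
        exact Finset.mem_range.mp this
      set kf : Fin (2*n) := ⟨k, by omega⟩ with hkf
      set kf1 : Fin (2*n) := ⟨k+1, hk1lt⟩ with hkf1
      have hkfval : (kf:ℕ) + 1 = (kf1:ℕ) := rfl
      have hkv : (kf:ℕ) = k := rfl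
      have hk1v : (kf1:ℕ) = k + 1 := rfl
      have hkf_ne : kf ≠ kf1 := by
        intro h
        have := congrArg Fin.val h
        simp [hkf, hkf1] at this
      have hkf_not : kf ∉ s := fun h => hk_not (Finset.mem_image_of_mem _ h)
      have hkf1_in : kf1 ∈ s := by
        rw [Finset.mem_image] at hk1_in
        obtain ⟨y, hy, hyv⟩ := hk1_in
        have : y = kf1 := Fin.val_injective (by rw [hyv])
        rwa [← this]
      set s' : Finset (Fin (2*n)) := insert kf (s.erase kf1) with hs'def
      have hkf_not_er : kf ∉ s.erase kf1 := fun h => hkf_not (Finset.mem_of_mem_erase h)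
      have hs' : s'.card = n := by
        rw [hs'def, Finset.card_insert_of_notMem hkf_not_er,
          Finset.card_erase_of_mem hkf1_in, hs]
        omega
      -- membership facts for s'
      have hkf_in_s' : kf ∈ s' := Finset.mem_insert_self _ _
      have hkf1_not_s' : kf1 ∉ s' := by
        rw [hs'def, Finset.mem_insert]
        rintro (h | h)
        · exact hkf_ne h.symm
        · exact (Finset.notMem_erase _ _) h
      have hmem_s' : ∀ x : Fin (2*n), x ∈ s' ↔ (x = kf ∨ (x ∈ s ∧ x ≠ kf1)) := by
        intro x
        rw [hs'def, Finset.mem_insert, Finset.mem_erase]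
        tauto
      have hsum' : (∑ x ∈ s', (x:ℕ)) + 1 = ∑ x ∈ s, (x:ℕ) := by
        rw [hs'def, Finset.sum_insert hkf_not_er]
        have h2 : (kf1:ℕ) + ∑ x ∈ s.erase kf1, (x:ℕ) = ∑ x ∈ s, (x:ℕ) :=
          Finset.add_sum_erase s (fun x => (x:ℕ)) hkf1_in
        omega
      -- key : unshuffle s = swap kf kf1 * unshuffle s'
      have hA : (fun i => Equiv.swap kf kf1 (s'.orderEmbOfFin hs' i)) = ⇑(s.orderEmbOfFin hs) := by
        apply Finset.orderEmbOfFin_unique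
        · intro i
          have hv : s'.orderEmbOfFin hs' i ∈ s' := Finset.orderEmbOfFin_mem _ _ _
          rw [hmem_s'] at hv
          rcases hv with h | ⟨h1, h2⟩
          · rw [h, Equiv.swap_apply_left]
            exact hkf1_in
          · have hne2 : s'.orderEmbOfFin hs' i ≠ kf := fun hc => hkf_not (hc ▸ h1)
            rw [Equiv.swap_apply_of_ne_of_ne hne2 h2]
            exact h1
        · intro a b hab
          exact swap_mono_insert hkfval hkf_in_s' hkf1_not_s'
            (Finset.orderEmbOfFin_mem _ _ _) (Finset.orderEmbOfFin_mem _ _ _)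
            ((s'.orderEmbOfFin hs').strictMono hab)
      have hB : (fun i => Equiv.swap kf kf1 (s'ᶜ.orderEmbOfFin (compl_card hs') i))
          = ⇑(sᶜ.orderEmbOfFin (compl_card hs)) := by
        apply Finset.orderEmbOfFin_unique
        · intro i
          have hv : s'ᶜ.orderEmbOfFin (compl_card hs') i ∈ s'ᶜ := Finset.orderEmbOfFin_mem _ _ _
          rw [Finset.mem_compl, hmem_s'] at hv
          push_neg at hv
          obtain ⟨hv1, hv2⟩ := hv
          by_cases hx1 : s'ᶜ.orderEmbOfFin (compl_card hs') i = kf1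
          · rw [hx1, Equiv.swap_apply_right]
            exact Finset.mem_compl.mpr hkf_not
          · rw [Equiv.swap_apply_of_ne_of_ne hv1 hx1]
            rw [Finset.mem_compl]
            intro hc
            exact hx1 (by tauto)
        · intro a b hab
          exact swap_mono_erase hkfval (Finset.mem_compl.mpr hkf1_not_s')
            (by rw [Finset.mem_compl]; intro h; exact h hkf_in_s')
            (Finset.orderEmbOfFin_mem _ _ _) (Finset.orderEmbOfFin_mem _ _ _)
            ((s'ᶜ.orderEmbOfFin (compl_card hs')).strictMono hab)
      have hkey : unshuffle n s hs = Equiv.swap kf kf1 * unshuffle n s' hs' := by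
        apply Equiv.ext
        intro x
        obtain ⟨y, rfl⟩ := (eNN n).surjective x
        rcases y with i | i
        · rw [unshuffle_inl, Equiv.Perm.mul_apply, unshuffle_inl, ← hA]
        · rw [unshuffle_inr, Equiv.Perm.mul_apply, unshuffle_inr, ← hB]
      rw [hkey, map_mul, Equiv.Perm.sign_swap hkf_ne]
      rw [ih (∑ x ∈ s', (x:ℕ)) (by omega) s' hs' rfl]
      have h1 : (∑ k ∈ s, (k:ℕ)) + n*(n-1)/2 = ((∑ x ∈ s', (x:ℕ)) + n*(n-1)/2) + 1 := by omega
      rw [h1, pow_succ]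
      exact mul_comm _ _


-- image of the complement
lemma image_val_compl {n : ℕ} (S : Finset (Fin (2*n))) :
    Sᶜ.image Fin.val = Finset.range (2*n) \ S.image Fin.val := by
  ext x
  simp only [Finset.mem_image, Finset.mem_sdiff, Finset.mem_range, Finset.mem_compl]
  constructor
  · rintro ⟨y, hy, rfl⟩
    refine ⟨y.isLt, ?_⟩
    rintro ⟨z, hz, hzy⟩
    exact hy (by rwa [Fin.val_injective hzy] at hz)
  · rintro ⟨hx, hnot⟩
    exact ⟨⟨x, hx⟩, fun hc => hnot ⟨⟨x, hx⟩, hc, rfl⟩, rfl⟩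

lemma image_val_orderEmb {n N : ℕ} (S : Finset (Fin N)) (hS : S.card = n) :
    S.image Fin.val = Finset.univ.image (fun i : Fin n => ((S.orderEmbOfFin hS i : Fin N) : ℕ)) := by
  ext x
  simp only [Finset.mem_image, Finset.mem_univ, true_and]
  constructor
  · rintro ⟨y, hy, rfl⟩
    have : y ∈ Set.range (S.orderEmbOfFin hS) := by rw [Finset.range_orderEmbOfFin]; exact hy
    obtain ⟨i, hi⟩ := this
    exact ⟨i, by rw [hi]⟩
  · rintro ⟨i, rfl⟩
    exact ⟨S.orderEmbOfFin hS i, Finset.orderEmbOfFin_mem _ _ _, rfl⟩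

-- Vandermonde product over a sorted enumeration equals vdmProd of the image
lemma vdm_eq {n N : ℕ} (hN : 1 ≤ N) (S : Finset (Fin N)) (hS : S.card = n) (v : ℕ → ℂ) :
    ∏ i : Fin n, ∏ j ∈ Finset.Ioi i, (v (S.orderEmbOfFin hS j) - v (S.orderEmbOfFin hS i))
      = ∏ p ∈ ((S.image Fin.val) ×ˢ (S.image Fin.val)).filter (fun p => p.1 < p.2),
          (v p.2 - v p.1) := by
  rw [prod_filter_product (S.image Fin.val) (S.image Fin.val)
    (fun a b => a < b) (fun a b => v b - v a)]
  set g : Fin n → ℕ := fun i => ((S.orderEmbOfFin hS i : Fin N) : ℕ) with hg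
  have hginj : Function.Injective g := fun a b hab =>
    (S.orderEmbOfFin hS).injective (Fin.val_injective hab)
  have hgmono : ∀ {a b : Fin n}, a < b ↔ g a < g b := by
    intro a b
    simp only [hg]
    rw [← Fin.lt_def]
    exact ((S.orderEmbOfFin hS).strictMono.lt_iff_lt).symm
  rw [image_val_orderEmb S hS, ← hg]
  rw [Finset.prod_image (fun a _ b _ h => hginj h)]
  apply Finset.prod_congr rfl
  intro i _
  have hfilter : (Finset.univ.image g).filter (fun b => g i < b)
      = (Finset.univ.filter (fun j => i < j)).image g := by
    ext y
    simp only [Finset.mem_filter, Finset.mem_image, Finset.mem_univ, true_and]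
    constructor
    · rintro ⟨⟨j, rfl⟩, h2⟩
      exact ⟨j, hgmono.mpr h2, rfl⟩
    · rintro ⟨j, hj, rfl⟩
      exact ⟨⟨j, rfl⟩, hgmono.mp hj⟩
  rw [hfilter, Finset.prod_image (fun a _ b _ h => hginj h)]
  apply Finset.prod_congr
  · ext j; simp [Finset.mem_Ioi]
  · intros; rfl

lemma low_card (n : ℕ) : (Finset.univ.filter (fun i : Fin (2*n) => (i:ℕ) < n)).card = n := by
  have h : Finset.univ.filter (fun i : Fin (2*n) => (i:ℕ) < n)
      = (Finset.range n).attachFin (fun m hm => by rw [Finset.mem_range] at hm; omega) := by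
    ext x
    simp [Finset.mem_attachFin, Finset.mem_range]
  rw [h, Finset.card_attachFin, Finset.card_range]

lemma high_card (n : ℕ) : (Finset.univ.filter (fun i : Fin (2*n) => ¬ (i:ℕ) < n)).card = n := by
  have h : Finset.univ.filter (fun i : Fin (2*n) => ¬ (i:ℕ) < n)
      = (Finset.Ico n (2*n)).attachFin (fun m hm => (Finset.mem_Ico.mp hm).2) := by
    ext x
    simp only [Finset.mem_filter, Finset.mem_univ, true_and, Finset.mem_attachFin,
      Finset.mem_Ico, not_lt]
    constructor
    · intro h; exact ⟨h, x.isLt⟩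
    · intro h; exact h.1
  rw [h, Finset.card_attachFin, Nat.card_Ico]
  omega


noncomputable def MS (n : ℕ) (S : Finset (Fin (2*n))) : Matrix (Fin (2*n)) (Fin (2*n)) ℂ :=
  Matrix.of fun k j : Fin (2*n) =>
    if k ∈ S then (if (j:ℕ) < n then omegaRoot n (k:ℕ) ^ (j:ℕ) else 0)
    else (if (j:ℕ) < n then 0 else omegaRoot n (k:ℕ) ^ (j:ℕ))

lemma det_MS_ne (n : ℕ) (S : Finset (Fin (2*n))) (hc : S.card ≠ n) :
    (MS n S).det = 0 := by
  rw [Matrix.det_apply]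
  apply Finset.sum_eq_zero
  intro σ _
  have hzero : ∃ i : Fin (2*n), MS n S (σ i) i = 0 := by
    by_cases hlt : S.card < n
    · -- complement rows abundant: some row not in S hits a column < n
      have hcard : (Finset.univ.filter (fun i : Fin (2*n) => σ i ∉ S)).card = 2*n - S.card := by
        have himg : (Finset.univ.filter (fun i : Fin (2*n) => σ i ∉ S)).image σ = Sᶜ := by
          ext y
          simp only [Finset.mem_image, Finset.mem_filter, Finset.mem_univ, true_and,
            Finset.mem_compl]
          constructor
          · rintro ⟨i, hi, rfl⟩; exact hi
          · intro hy; exact ⟨σ.symm y, by simpa using hy, by simp⟩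
        have := congrArg Finset.card himg
        rwa [Finset.card_image_of_injective _ σ.injective, Finset.card_compl,
          Fintype.card_fin] at this
      have hnotsub : ¬ (Finset.univ.filter (fun i : Fin (2*n) => σ i ∉ S))
          ⊆ (Finset.univ.filter (fun i : Fin (2*n) => ¬ (i:ℕ) < n)) := by
        intro hsub
        have := Finset.card_le_card hsub
        rw [hcard, high_card] at this
        omega
      rw [Finset.not_subset] at hnotsub
      obtain ⟨i, hi1, hi2⟩ := hnotsub
      simp only [Finset.mem_filter, Finset.mem_univ, true_and, not_not] at hi1 hi2
      exact ⟨i, by simp only [MS, Matrix.of_apply, if_neg hi1, if_pos hi2]⟩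
    · -- S rows abundant: some row in S hits a column ≥ n
      have hgt : n < S.card := by omega
      have hcard : (Finset.univ.filter (fun i : Fin (2*n) => σ i ∈ S)).card = S.card := by
        have himg : (Finset.univ.filter (fun i : Fin (2*n) => σ i ∈ S)).image σ = S := by
          ext y
          simp only [Finset.mem_image, Finset.mem_filter, Finset.mem_univ, true_and]
          constructor
          · rintro ⟨i, hi, rfl⟩; exact hi
          · intro hy; exact ⟨σ.symm y, by simpa using hy, by simp⟩
        have := congrArg Finset.card himg
        rwa [Finset.card_image_of_injective _ σ.injective] at this
      have hnotsub : ¬ (Finset.univ.filter (fun i : Fin (2*n) => σ i ∈ S))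
          ⊆ (Finset.univ.filter (fun i : Fin (2*n) => (i:ℕ) < n)) := by
        intro hsub
        have := Finset.card_le_card hsub
        rw [hcard, low_card] at this
        omega
      rw [Finset.not_subset] at hnotsub
      obtain ⟨i, hi1, hi2⟩ := hnotsub
      simp only [Finset.mem_filter, Finset.mem_univ, true_and] at hi1 hi2
      exact ⟨i, by simp only [MS, Matrix.of_apply, if_pos hi1, if_neg hi2]⟩
  obtain ⟨i, hi⟩ := hzero
  rw [Finset.prod_eq_zero (f := fun j : Fin (2*n) => MS n S (σ j) j) (Finset.mem_univ i) hi,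
    smul_zero]

lemma coeff_arith (n : ℕ) (hn : 1 ≤ n) (A C : ℕ) (hAC : A + C = n * (2*n - 1)) :
    ((-1 : ℂ) ^ (A + n*(n-1)/2)) * ((-1 : ℂ) ^ C * Complex.I ^ (n % 2 * n))
      = (-1 : ℂ) ^ (n * (n+1) / 2) * Complex.I ^ (n % 2 * n) := by
  rw [← mul_assoc, ← pow_add]
  congr 1
  apply neg_one_pow_par
  have h1 : n*(n-1) + 2*n = n*(n+1) := by
    rcases n with _ | m
    · omega
    · rw [Nat.add_sub_cancel]
      ring
  have h2 : n*(2*n-1) + n = 2*(n*n) := by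
    rcases n with _ | m
    · omega
    · have he : 2*(m+1)-1 = 2*m+1 := by omega
      rw [he]
      ring
  have h3 : 2*(n*(n-1)/2) = n*(n-1) := by
    have he : Even (n*(n-1)) := by
      rcases Nat.even_or_odd n with h | h
      · exact h.mul_right _
      · exact (Nat.Odd.sub_odd h odd_one).mul_left _
    obtain ⟨c, hc⟩ := he
    omega
  have h4 : 2*(n*(n+1)/2) = n*(n+1) := by
    have he : Even (n*(n+1)) := Nat.even_mul_succ_self n
    obtain ⟨c, hc⟩ := he
    omega
  omega

lemma det_MS_eq (n : ℕ) (hn : 1 ≤ n) (S : Finset (Fin (2*n))) (hS : S.card = n) :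
    (MS n S).det = cCoeff n (S.image Fin.val) := by
  set σ := unshuffle n S hS with hσ
  set a := S.orderEmbOfFin hS with ha
  set b := Sᶜ.orderEmbOfFin (compl_card hS) with hb
  set VA : Matrix (Fin n) (Fin n) ℂ := Matrix.vandermonde (fun i => omegaRoot n ((a i : Fin (2*n)) : ℕ)) with hVA
  set VD : Matrix (Fin n) (Fin n) ℂ :=
    Matrix.of (fun i i' : Fin n => omegaRoot n ((b i : Fin (2*n)) : ℕ) ^ (n + (i' : ℕ))) with hVD
  have hQ : ((MS n S).submatrix σ id).submatrix (eNN n) (eNN n)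
      = Matrix.fromBlocks VA 0 0 VD := by
    ext x y
    rcases x with i | i <;> rcases y with i' | i'
    · simp only [Matrix.submatrix_apply, id_eq, Matrix.fromBlocks_apply₁₁]
      rw [hσ, unshuffle_inl]
      have hmem : a i ∈ S := Finset.orderEmbOfFin_mem _ _ _
      have hval : ((eNN n (Sum.inl i') : Fin (2*n)) : ℕ) = (i' : ℕ) := eNN_inl_val n i'
      simp only [MS, Matrix.of_apply, if_pos hmem, hval, if_pos i'.isLt]
      exact if_pos hmem
    · simp only [Matrix.submatrix_apply, id_eq, Matrix.fromBlocks_apply₁₂]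
      rw [hσ, unshuffle_inl]
      have hmem : a i ∈ S := Finset.orderEmbOfFin_mem _ _ _
      have hval : ((eNN n (Sum.inr i') : Fin (2*n)) : ℕ) = n + (i' : ℕ) := eNN_inr_val n i'
      simp only [MS, Matrix.of_apply, if_pos hmem, hval, if_neg (by omega : ¬ n + (i':ℕ) < n)]
      exact if_pos hmem
    · simp only [Matrix.submatrix_apply, id_eq, Matrix.fromBlocks_apply₂₁]
      rw [hσ, unshuffle_inr]
      have hmem : b i ∈ Sᶜ := Finset.orderEmbOfFin_mem _ _ _
      have hmem2 : b i ∉ S := Finset.mem_compl.mp hmem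
      have hval : ((eNN n (Sum.inl i') : Fin (2*n)) : ℕ) = (i' : ℕ) := eNN_inl_val n i'
      simp only [MS, Matrix.of_apply, if_neg hmem2, hval, if_pos i'.isLt]
      exact if_neg hmem2
    · simp only [Matrix.submatrix_apply, id_eq, Matrix.fromBlocks_apply₂₂]
      rw [hσ, unshuffle_inr]
      have hmem : b i ∈ Sᶜ := Finset.orderEmbOfFin_mem _ _ _
      have hmem2 : b i ∉ S := Finset.mem_compl.mp hmem
      have hval : ((eNN n (Sum.inr i') : Fin (2*n)) : ℕ) = n + (i' : ℕ) := eNN_inr_val n i'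
      simp only [MS, Matrix.of_apply, if_neg hmem2, hval, if_neg (by omega : ¬ n + (i':ℕ) < n), hVD,
        Matrix.of_apply]
      exact if_neg hmem2
  have hdet1 : ((MS n S).submatrix σ id).det
      = ((Equiv.Perm.sign σ : ℤ) : ℂ) * (MS n S).det := Matrix.det_permute σ (MS n S)
  have hdet2 : ((MS n S).submatrix σ id).det = VA.det * VD.det := by
    rw [← Matrix.det_submatrix_equiv_self (eNN n) ((MS n S).submatrix σ id), hQ,
      Matrix.det_fromBlocks_zero₁₂]
  set A := ∑ k ∈ S, (k:ℕ) with hA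
  have hsign := sign_unshuffle_aux n hn A S hS rfl
  have hsignC : ((Equiv.Perm.sign σ : ℤ) : ℂ) = (-1 : ℂ) ^ (A + n*(n-1)/2) := by
    rw [← hσ] at hsign
    rw [hsign]
    push_cast
    ring
  have hVAdet : VA.det = vdmProd n (S.image Fin.val) := by
    calc VA.det = ∏ i : Fin n, ∏ j ∈ Finset.Ioi i,
          (omegaRoot n ((a j : Fin (2*n)) : ℕ) - omegaRoot n ((a i : Fin (2*n)) : ℕ)) :=
        Matrix.det_vandermonde _
      _ = ∏ p ∈ ((S.image Fin.val) ×ˢ (S.image Fin.val)).filter (fun p => p.1 < p.2),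
          (omegaRoot n p.2 - omegaRoot n p.1) := vdm_eq (by omega) S hS (omegaRoot n)
      _ = vdmProd n (S.image Fin.val) := rfl
  have hCsub : Sᶜ.image Fin.val = Finset.range (2*n) \ S.image Fin.val := image_val_compl S
  set C := ∑ x ∈ Sᶜ.image Fin.val, x with hC
  have hVDdet : VD.det = (-1:ℂ)^C * Complex.I ^ (n % 2 * n)
      * vdmProd n (Finset.range (2*n) \ S.image Fin.val) := by
    have hVD2 : VD = Matrix.of (fun i i' : Fin n =>
        (omegaRoot n ((b i : Fin (2*n)) : ℕ) ^ n)
          * Matrix.vandermonde (fun i => omegaRoot n ((b i : Fin (2*n)) : ℕ)) i i') := by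
      ext i i'
      simp only [hVD, Matrix.of_apply, Matrix.vandermonde, pow_add]
    rw [hVD2, Matrix.det_mul_column]
    have hprodb : ∏ i : Fin n, omegaRoot n ((b i : Fin (2*n)) : ℕ) ^ n
        = (-1:ℂ)^C * Complex.I ^ (n % 2 * n) := by
      have h1 : ∏ i : Fin n, omegaRoot n ((b i : Fin (2*n)) : ℕ) ^ n
          = ∏ x ∈ Sᶜ.image Fin.val, omegaRoot n x ^ n := by
        rw [image_val_orderEmb Sᶜ (compl_card hS)]
        rw [Finset.prod_image (fun x _ y _ h =>
          (Sᶜ.orderEmbOfFin (compl_card hS)).injective (Fin.val_injective h))]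
      rw [h1]
      have h2 : ∀ x ∈ Sᶜ.image Fin.val, omegaRoot n x ^ n = (-1:ℂ)^x * Complex.I ^ (n % 2) :=
        fun x _ => omega_pow_n n hn x
      rw [Finset.prod_congr rfl h2, Finset.prod_mul_distrib, Finset.prod_pow_eq_pow_sum,
        Finset.prod_const, ← hC]
      have hcard : (Sᶜ.image Fin.val).card = n := by
        rw [Finset.card_image_of_injective _ Fin.val_injective, compl_card hS]
      rw [hcard, ← pow_mul]
    have hvdm : Matrix.det (Matrix.vandermonde (fun i => omegaRoot n ((b i : Fin (2*n)) : ℕ)))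
        = vdmProd n (Finset.range (2*n) \ S.image Fin.val) := by
      calc Matrix.det (Matrix.vandermonde (fun i => omegaRoot n ((b i : Fin (2*n)) : ℕ)))
          = ∏ i : Fin n, ∏ j ∈ Finset.Ioi i,
            (omegaRoot n ((b j : Fin (2*n)) : ℕ) - omegaRoot n ((b i : Fin (2*n)) : ℕ)) :=
          Matrix.det_vandermonde _
        _ = ∏ p ∈ ((Sᶜ.image Fin.val) ×ˢ (Sᶜ.image Fin.val)).filter (fun p => p.1 < p.2),
            (omegaRoot n p.2 - omegaRoot n p.1) := vdm_eq (by omega) Sᶜ (compl_card hS) (omegaRoot n)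
        _ = vdmProd n (Sᶜ.image Fin.val) := rfl
        _ = vdmProd n (Finset.range (2*n) \ S.image Fin.val) := by rw [hCsub]
    rw [hprodb, hvdm]
  have hss : ((Equiv.Perm.sign σ : ℤ) : ℂ) * ((Equiv.Perm.sign σ : ℤ) : ℂ) = 1 := by
    rw [hsignC, ← pow_add]
    exact Even.neg_one_pow ⟨A + n*(n-1)/2, rfl⟩
  have hMS : (MS n S).det = ((Equiv.Perm.sign σ : ℤ) : ℂ) * (VA.det * VD.det) := by
    have heq : ((Equiv.Perm.sign σ : ℤ) : ℂ) * (MS n S).det = VA.det * VD.det :=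
      hdet1.symm.trans hdet2
    calc (MS n S).det
        = (((Equiv.Perm.sign σ : ℤ) : ℂ) * ((Equiv.Perm.sign σ : ℤ) : ℂ)) * (MS n S).det := by
          rw [hss, one_mul]
      _ = ((Equiv.Perm.sign σ : ℤ) : ℂ) * (((Equiv.Perm.sign σ : ℤ) : ℂ) * (MS n S).det) := by
          ring
      _ = ((Equiv.Perm.sign σ : ℤ) : ℂ) * (VA.det * VD.det) := by rw [heq]
  have hAC : A + C = n * (2*n - 1) := by
    have h1 : A = ∑ x ∈ S.image Fin.val, x := by
      rw [hA, Finset.sum_image (fun x _ y _ h => Fin.val_injective h)]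
    have h2 : ∑ x ∈ Finset.range (2*n) \ S.image Fin.val, x + ∑ x ∈ S.image Fin.val, x
        = ∑ x ∈ Finset.range (2*n), x := by
      apply Finset.sum_sdiff
      intro x hx
      rw [Finset.mem_image] at hx
      obtain ⟨y, _, rfl⟩ := hx
      exact Finset.mem_range.mpr y.isLt
    rw [h1, hC, hCsub]
    rw [sum_range_two_n] at h2
    omega
  rw [hMS, hsignC, hVAdet, hVDdet]
  have hkey := coeff_arith n hn A C hAC
  calc (-1:ℂ) ^ (A + n*(n-1)/2) * (vdmProd n (S.image Fin.val)
        * ((-1:ℂ)^C * Complex.I ^ (n % 2 * n)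
            * vdmProd n (Finset.range (2*n) \ S.image Fin.val)))
      = ((-1:ℂ) ^ (A + n*(n-1)/2) * ((-1:ℂ)^C * Complex.I ^ (n % 2 * n)))
          * (vdmProd n (S.image Fin.val) * vdmProd n (Finset.range (2*n) \ S.image Fin.val)) := by
        ring
    _ = ((-1:ℂ) ^ (n*(n+1)/2) * Complex.I ^ (n % 2 * n))
          * (vdmProd n (S.image Fin.val) * vdmProd n (Finset.range (2*n) \ S.image Fin.val)) := by
        rw [hkey]
    _ = cCoeff n (S.image Fin.val) := by
        rw [cCoeff]
        ring


lemma det_mixed (n : ℕ) (hn : 1 ≤ n) (t : ℕ → ℂ) :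
    (Matrix.of fun j k : Fin (2*n) =>
        if (j:ℕ) < n then omegaRoot n (k:ℕ) ^ (j:ℕ) * t (k:ℕ)
        else omegaRoot n (k:ℕ) ^ (j:ℕ)).det
    = ∑ I ∈ (Finset.range (2*n)).powersetCard n, cCoeff n I * ∏ k ∈ I, t k := by
  classical
  set u : Fin (2*n) → (Fin (2*n) → ℂ) :=
    fun k j => if (j:ℕ) < n then omegaRoot n (k:ℕ) ^ (j:ℕ) else 0 with hu
  set w : Fin (2*n) → (Fin (2*n) → ℂ) :=
    fun k j => if (j:ℕ) < n then 0 else omegaRoot n (k:ℕ) ^ (j:ℕ) with hw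
  have htr : (Matrix.of fun j k : Fin (2*n) =>
      if (j:ℕ) < n then omegaRoot n (k:ℕ) ^ (j:ℕ) * t (k:ℕ)
      else omegaRoot n (k:ℕ) ^ (j:ℕ)).det
      = (Matrix.of ((fun k : Fin (2*n) => t (k:ℕ) • u k) + w)).det := by
    rw [← Matrix.det_transpose]
    congr 1
    ext k j
    simp only [Matrix.transpose_apply, Matrix.of_apply, Pi.add_apply, Pi.smul_apply,
      smul_eq_mul, hu, hw]
    by_cases hj : (j:ℕ) < n
    · rw [if_pos hj, if_pos hj, if_pos hj]
      ring
    · rw [if_neg hj, if_neg hj, if_neg hj]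
      ring
  rw [htr]
  have hdet : (Matrix.of ((fun k : Fin (2*n) => t (k:ℕ) • u k) + w)).det
      = (Matrix.detRowAlternating :
          (Fin (2*n) → ℂ) [⋀^Fin (2*n)]→ₗ[ℂ] ℂ).toMultilinearMap
            ((fun k : Fin (2*n) => t (k:ℕ) • u k) + w) := rfl
  rw [hdet, MultilinearMap.map_add_univ]
  have hterm : ∀ S : Finset (Fin (2*n)),
      (Matrix.detRowAlternating : (Fin (2*n) → ℂ) [⋀^Fin (2*n)]→ₗ[ℂ] ℂ).toMultilinearMap
        (S.piecewise (fun k : Fin (2*n) => t (k:ℕ) • u k) w)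
      = (∏ k ∈ S, t (k:ℕ)) * (MS n S).det := by
    intro S
    have hpw : S.piecewise (fun k : Fin (2*n) => t (k:ℕ) • u k) w
        = S.piecewise (fun k => t (k:ℕ) • (S.piecewise u w) k) (S.piecewise u w) := by
      funext k
      by_cases hk : k ∈ S
      · rw [Finset.piecewise_eq_of_mem _ _ _ hk, Finset.piecewise_eq_of_mem _ _ _ hk,
          Finset.piecewise_eq_of_mem _ _ _ hk]
      · rw [Finset.piecewise_eq_of_notMem _ _ _ hk, Finset.piecewise_eq_of_notMem _ _ _ hk,
          Finset.piecewise_eq_of_notMem _ _ _ hk]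
    rw [hpw, MultilinearMap.map_piecewise_smul]
    have hMSeq : Matrix.of (S.piecewise u w) = MS n S := by
      ext k j
      by_cases hk : k ∈ S
      · rw [Matrix.of_apply, Finset.piecewise_eq_of_mem _ _ _ hk]
        simp only [MS, Matrix.of_apply, if_pos hk, hu]
      · rw [Matrix.of_apply, Finset.piecewise_eq_of_notMem _ _ _ hk]
        simp only [MS, Matrix.of_apply, if_neg hk, hw]
    have h2 : (Matrix.detRowAlternating :
        (Fin (2*n) → ℂ) [⋀^Fin (2*n)]→ₗ[ℂ] ℂ).toMultilinearMap (S.piecewise u w)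
        = (MS n S).det := by
      calc (Matrix.detRowAlternating :
          (Fin (2*n) → ℂ) [⋀^Fin (2*n)]→ₗ[ℂ] ℂ).toMultilinearMap (S.piecewise u w)
          = (Matrix.of (S.piecewise u w)).det := rfl
        _ = (MS n S).det := by rw [hMSeq]
    rw [h2, smul_eq_mul]
  rw [Finset.sum_congr rfl (fun S _ => hterm S)]
  -- drop the terms with S.card ≠ n
  rw [← Finset.sum_filter_of_ne (p := fun S : Finset (Fin (2*n)) => S.card = n)
    (fun S _ hne => by
      by_contra hc
      exact hne (by rw [det_MS_ne n S hc, mul_zero]))]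
  -- reindex by taking images in ℕ
  apply Finset.sum_nbij' (i := fun S : Finset (Fin (2*n)) => S.image Fin.val)
    (j := fun I : Finset ℕ => Finset.univ.filter (fun x : Fin (2*n) => (x:ℕ) ∈ I))
  · intro S hS
    rw [Finset.mem_filter] at hS
    rw [Finset.mem_powersetCard]
    constructor
    · intro x hx
      rw [Finset.mem_image] at hx
      obtain ⟨y, _, rfl⟩ := hx
      exact Finset.mem_range.mpr y.isLt
    · rw [Finset.card_image_of_injective _ Fin.val_injective]
      exact hS.2
  · intro I hI
    rw [Finset.mem_powersetCard] at hI
    rw [Finset.mem_filter]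
    refine ⟨Finset.mem_univ _, ?_⟩
    have himg : (Finset.univ.filter (fun x : Fin (2*n) => (x:ℕ) ∈ I)).image Fin.val = I := by
      ext y
      simp only [Finset.mem_image, Finset.mem_filter, Finset.mem_univ, true_and]
      constructor
      · rintro ⟨x, hx, rfl⟩; exact hx
      · intro hy
        have hlt : y < 2*n := Finset.mem_range.mp (hI.1 hy)
        exact ⟨⟨y, hlt⟩, hy, rfl⟩
    have := congrArg Finset.card himg
    rwa [Finset.card_image_of_injective _ Fin.val_injective, hI.2] at this
  · intro S hS
    ext x
    simp only [Finset.mem_filter, Finset.mem_univ, true_and, Finset.mem_image]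
    constructor
    · rintro ⟨y, hy, hxy⟩
      rwa [← Fin.val_injective hxy]
    · intro hx; exact ⟨x, hx, rfl⟩
  · intro I hI
    rw [Finset.mem_powersetCard] at hI
    ext y
    simp only [Finset.mem_image, Finset.mem_filter, Finset.mem_univ, true_and]
    constructor
    · rintro ⟨x, hx, rfl⟩; exact hx
    · intro hy
      have hlt : y < 2*n := Finset.mem_range.mp (hI.1 hy)
      exact ⟨⟨y, hlt⟩, hy, rfl⟩
  · intro S hS
    rw [Finset.mem_filter] at hS
    rw [det_MS_eq n hn S hS.2, Finset.prod_image (fun x _ y _ h => Fin.val_injective h)]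
    ring


lemma conj_omega (n : ℕ) (hn : 1 ≤ n) (k : Fin (2*n)) :
    (starRingEnd ℂ) (omegaRoot n (k:ℕ)) = omegaRoot n ((kappa n k : Fin (2*n)) : ℕ) := by
  obtain ⟨c, _, hsum⟩ := kappa_add n hn k
  have hne : (n : ℂ) ≠ 0 := Nat.cast_ne_zero.mpr (by omega)
  set j := ((kappa n k : Fin (2*n)) : ℕ) with hj
  have hC : (j:ℂ) + ((k:ℕ):ℂ) + ((n % 2 : ℕ):ℂ) = 2*(n:ℂ)*(c:ℂ) := by exact_mod_cast hsum
  rw [omegaRoot, omegaRoot, ← Complex.exp_conj]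
  have hconj : (starRingEnd ℂ)
        (Complex.I * (Real.pi : ℂ) * (2 * ((k:ℕ) : ℂ) + ((n % 2 : ℕ) : ℂ)) / (2 * (n : ℂ)))
      = - (Complex.I * (Real.pi : ℂ) * (2 * ((k:ℕ) : ℂ) + ((n % 2 : ℕ) : ℂ)) / (2 * (n : ℂ))) := by
    simp [map_div₀, map_ofNat]
    ring
  rw [hconj]
  have harg : Complex.I * (Real.pi : ℂ) * (2 * (j : ℂ) + ((n % 2 : ℕ) : ℂ)) / (2 * (n : ℂ))
      = - (Complex.I * (Real.pi : ℂ) * (2 * ((k:ℕ) : ℂ) + ((n % 2 : ℕ) : ℂ)) / (2 * (n : ℂ)))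
        + (c : ℂ) * (2 * (Real.pi : ℂ) * Complex.I) := by
    field_simp
    linear_combination 2 * hC
  rw [harg, Complex.exp_add, exp_nat_two_pi_mul_I, mul_one]

noncomputable def rhoPerm (n : ℕ) : Equiv.Perm (Fin (2*n)) :=
  Equiv.permCongr (eNN n) (Equiv.sumCongr Fin.revPerm Fin.revPerm)

lemma sign_rho (n : ℕ) : Equiv.Perm.sign (rhoPerm n) = 1 := by
  rw [rhoPerm, Equiv.Perm.sign_permCongr, Equiv.Perm.sign_sumCongr]
  exact Int.units_mul_self _

lemma rho_lt (n : ℕ) (j : Fin (2*n)) (h : (j:ℕ) < n) :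
    ((rhoPerm n j : Fin (2*n)) : ℕ) = n - ((j:ℕ) + 1) := by
  have hj : j = eNN n (Sum.inl ⟨(j:ℕ), h⟩) := Fin.val_injective (by rw [eNN_inl_val])
  conv_lhs => rw [hj]
  rw [rhoPerm, Equiv.permCongr_apply, Equiv.symm_apply_apply]
  simp only [Equiv.sumCongr_apply, Sum.map_inl]
  rw [eNN_inl_val,
    show Fin.revPerm (⟨(j:ℕ), h⟩ : Fin n) = Fin.rev ⟨(j:ℕ), h⟩ from rfl, Fin.val_rev]

lemma rho_ge (n : ℕ) (j : Fin (2*n)) (h : ¬ (j:ℕ) < n) :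
    ((rhoPerm n j : Fin (2*n)) : ℕ) = n + (n - ((j:ℕ) - n + 1)) := by
  have hlt : (j:ℕ) - n < n := by have := j.isLt; omega
  have hj : eNN n (Sum.inr ⟨(j:ℕ) - n, hlt⟩) = j := Fin.val_injective
    (by rw [eNN_inr_val]; exact (by omega : n + ((j:ℕ) - n) = (j:ℕ)))
  conv_lhs => rw [← hj]
  rw [rhoPerm, Equiv.permCongr_apply, Equiv.symm_apply_apply]
  simp only [Equiv.sumCongr_apply, Sum.map_inr]
  rw [eNN_inr_val,
    show Fin.revPerm (⟨(j:ℕ) - n, hlt⟩ : Fin n) = Fin.rev ⟨(j:ℕ) - n, hlt⟩ from rfl, Fin.val_rev]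

lemma det_conj_matrix (n : ℕ) (hn : 1 ≤ n) (z : ℂ) :
    (Matrix.of fun j k : Fin (2*n) =>
        if (j:ℕ) < n then omegaRoot n (k:ℕ) ^ (j:ℕ)
          * Complex.exp ((starRingEnd ℂ) (omegaRoot n (k:ℕ)) * z)
        else omegaRoot n (k:ℕ) ^ (j:ℕ)).det
    = (Matrix.of fun j k : Fin (2*n) =>
        if (j:ℕ) < n then omegaRoot n (k:ℕ) ^ (j:ℕ) * Complex.exp (omegaRoot n (k:ℕ) * z)
        else omegaRoot n (k:ℕ) ^ (j:ℕ)).det := by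
  set B : Matrix (Fin (2*n)) (Fin (2*n)) ℂ := Matrix.of fun j k : Fin (2*n) =>
    if (j:ℕ) < n then omegaRoot n (k:ℕ) ^ (j:ℕ) * Complex.exp (omegaRoot n (k:ℕ) * z)
    else omegaRoot n (k:ℕ) ^ (j:ℕ) with hB
  -- entry-wise identity
  have hentry : (Matrix.of fun j k : Fin (2*n) =>
      if (j:ℕ) < n then omegaRoot n (k:ℕ) ^ (j:ℕ)
        * Complex.exp ((starRingEnd ℂ) (omegaRoot n (k:ℕ)) * z)
      else omegaRoot n (k:ℕ) ^ (j:ℕ))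
      = Matrix.of (fun j k : Fin (2*n) =>
          (if (j:ℕ) < n then (1:ℂ) else (-1) ^ (n % 2)) *
            (Matrix.of (fun j' k' : Fin (2*n) =>
              omegaRoot n (k':ℕ) ^ (n-1) * (B.submatrix (rhoPerm n) (kappa n)) j' k') j k)) := by
    ext j k
    simp only [Matrix.of_apply, Matrix.submatrix_apply]
    have hωk := omega_ne_zero n (k:ℕ)
    by_cases hj : (j:ℕ) < n
    · rw [if_pos hj, if_pos hj]
      have hr := rho_lt n j hj
      have hrlt : ((rhoPerm n j : Fin (2*n)) : ℕ) < n := by omega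
      rw [hB]
      simp only [Matrix.of_apply, if_pos hrlt]
      rw [conj_omega n hn k, one_mul]
      rw [hr]
      -- goal: ω^j * exp(ω_κk z) = ω^{n-1} * (ω_κk^{n-1-j} * exp(ω_κk z))
      rw [← conj_omega n hn k]
      apply mul_right_cancel₀ (pow_ne_zero (n - ((j:ℕ)+1)) hωk)
      have h1 : omegaRoot n (k:ℕ) ^ (j:ℕ) * omegaRoot n (k:ℕ) ^ (n - ((j:ℕ)+1))
          = omegaRoot n (k:ℕ) ^ (n-1) := by
        rw [← pow_add]
        congr 1
        omega
      calc omegaRoot n (k:ℕ) ^ (j:ℕ) * Complex.exp ((starRingEnd ℂ) (omegaRoot n (k:ℕ)) * z)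
            * omegaRoot n (k:ℕ) ^ (n - ((j:ℕ)+1))
          = (omegaRoot n (k:ℕ) ^ (j:ℕ) * omegaRoot n (k:ℕ) ^ (n - ((j:ℕ)+1)))
              * Complex.exp ((starRingEnd ℂ) (omegaRoot n (k:ℕ)) * z) := by ring
        _ = omegaRoot n (k:ℕ) ^ (n-1)
              * Complex.exp ((starRingEnd ℂ) (omegaRoot n (k:ℕ)) * z) := by rw [h1]
        _ = omegaRoot n (k:ℕ) ^ (n-1) * ((starRingEnd ℂ) (omegaRoot n (k:ℕ)) ^ (n - ((j:ℕ)+1))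
              * Complex.exp ((starRingEnd ℂ) (omegaRoot n (k:ℕ)) * z))
              * omegaRoot n (k:ℕ) ^ (n - ((j:ℕ)+1)) := by
            rw [show omegaRoot n (k:ℕ) ^ (n-1) * ((starRingEnd ℂ) (omegaRoot n (k:ℕ)) ^ (n - ((j:ℕ)+1))
              * Complex.exp ((starRingEnd ℂ) (omegaRoot n (k:ℕ)) * z))
              * omegaRoot n (k:ℕ) ^ (n - ((j:ℕ)+1))
              = omegaRoot n (k:ℕ) ^ (n-1) * Complex.exp ((starRingEnd ℂ) (omegaRoot n (k:ℕ)) * z)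
                * ((starRingEnd ℂ) (omegaRoot n (k:ℕ)) ^ (n - ((j:ℕ)+1))
                  * omegaRoot n (k:ℕ) ^ (n - ((j:ℕ)+1))) from by ring]
            rw [conj_omega_pow, mul_one]
    · rw [if_neg hj, if_neg hj]
      have hr := rho_ge n j hj
      have hjlt := j.isLt
      have hrge : ¬ ((rhoPerm n j : Fin (2*n)) : ℕ) < n := by omega
      rw [hB]
      simp only [Matrix.of_apply, if_neg hrge]
      rw [← conj_omega n hn k]
      set r := ((rhoPerm n j : Fin (2*n)) : ℕ) with hrr
      apply mul_right_cancel₀ (pow_ne_zero r hωk)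
      have h1 : (starRingEnd ℂ) (omegaRoot n (k:ℕ)) ^ r * omegaRoot n (k:ℕ) ^ r = 1 :=
        conj_omega_pow n (k:ℕ) r
      have h2 : omegaRoot n (k:ℕ) ^ (j:ℕ) * omegaRoot n (k:ℕ) ^ r
          = omegaRoot n (k:ℕ) ^ (n-1) * omegaRoot n (k:ℕ) ^ (2*n) := by
        rw [← pow_add, ← pow_add]
        congr 1
        omega
      calc omegaRoot n (k:ℕ) ^ (j:ℕ) * omegaRoot n (k:ℕ) ^ r
          = omegaRoot n (k:ℕ) ^ (n-1) * omegaRoot n (k:ℕ) ^ (2*n) := h2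
        _ = omegaRoot n (k:ℕ) ^ (n-1) * (-1:ℂ) ^ (n % 2) := by rw [omega_pow_two_n n hn]
        _ = (-1:ℂ) ^ (n % 2) * (omegaRoot n (k:ℕ) ^ (n-1)
              * ((starRingEnd ℂ) (omegaRoot n (k:ℕ)) ^ r * omegaRoot n (k:ℕ) ^ r)) := by
            rw [h1, mul_one]; ring
        _ = (-1:ℂ) ^ (n % 2) * (omegaRoot n (k:ℕ) ^ (n-1)
              * (starRingEnd ℂ) (omegaRoot n (k:ℕ)) ^ r) * omegaRoot n (k:ℕ) ^ r := by ring
  rw [hentry]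
  rw [Matrix.det_mul_column (fun j : Fin (2*n) => if (j:ℕ) < n then (1:ℂ) else (-1) ^ (n % 2))]
  rw [Matrix.det_mul_row (fun k : Fin (2*n) => omegaRoot n (k:ℕ) ^ (n-1))]
  have hsub : (B.submatrix (rhoPerm n) (kappa n))
      = ((B.submatrix id (kappa n)).submatrix (rhoPerm n) id) := rfl
  rw [hsub, Matrix.det_permute, Matrix.det_permute', sign_rho, sign_kappa n hn]
  -- now collect the scalar factors
  have hrowfac : (∏ j : Fin (2*n), if (j:ℕ) < n then (1:ℂ) else (-1) ^ (n % 2))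
      = (-1:ℂ) ^ (n % 2 * n) := by
    rw [← Finset.prod_filter_mul_prod_filter_not Finset.univ (fun j : Fin (2*n) => (j:ℕ) < n)]
    rw [Finset.prod_congr rfl (fun j hj => if_pos (Finset.mem_filter.mp hj).2),
      Finset.prod_congr rfl (fun j hj => if_neg (Finset.mem_filter.mp hj).2)]
    rw [Finset.prod_const, Finset.prod_const, low_card, high_card, one_pow, one_mul, ← pow_mul]
  have hcolfac : (∏ k : Fin (2*n), omegaRoot n (k:ℕ) ^ (n-1))
      = ((-1:ℂ) ^ (n % 2 + 1)) ^ (n-1) := by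
    rw [← prod_omega_pow n hn (n-1)]
    exact Fin.prod_univ_eq_prod_range (fun k => omegaRoot n k ^ (n-1)) (2*n)
  rw [hrowfac, hcolfac]
  have hunits : (((-1:ℤˣ) ^ (n + n % 2 + 1) : ℤˣ) : ℤ) = ((-1:ℤ)) ^ (n + n % 2 + 1) := by
    push_cast
    ring
  have htotal : (-1:ℂ) ^ (n % 2 * n) * (((-1:ℂ) ^ (n % 2 + 1)) ^ (n-1)
      * (-1:ℂ) ^ (n + n % 2 + 1)) = 1 := by
    rw [← pow_mul, ← pow_add, ← pow_add]
    have : (-1:ℂ) ^ (0:ℕ) = 1 := rfl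
    rw [← this]
    apply neg_one_pow_par
    rcases Nat.even_or_odd n with he | ho
    · have hm : n % 2 = 0 := Nat.even_iff.mp he
      rw [hm]
      omega
    · have hm : n % 2 = 1 := Nat.odd_iff.mp ho
      rw [hm]
      have h2 : n % 2 = 1 := hm
      omega
  rw [hunits]
  push_cast
  linear_combination B.det * htotal


lemma cCoeff_compl (n : ℕ) (I : Finset ℕ) (hI : I ⊆ Finset.range (2*n)) :
    cCoeff n (Finset.range (2*n) \ I) = cCoeff n I := by
  rw [cCoeff, cCoeff, Finset.sdiff_sdiff_self_left, Finset.inter_eq_right.mpr hI]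
  ring

lemma sum_prod_exp_compl (n : ℕ) (hn : 1 ≤ n) (h : ℕ → ℂ)
    (hsum0 : ∑ k ∈ Finset.range (2*n), h k = 0) :
    ∑ I ∈ (Finset.range (2*n)).powersetCard n, cCoeff n I * ∏ k ∈ I, Complex.exp (-(h k))
    = ∑ I ∈ (Finset.range (2*n)).powersetCard n, cCoeff n I * ∏ k ∈ I, Complex.exp (h k) := by
  have hmem : ∀ I ∈ (Finset.range (2*n)).powersetCard n,
      Finset.range (2*n) \ I ∈ (Finset.range (2*n)).powersetCard n := by
    intro I hI
    rw [Finset.mem_powersetCard] at hI ⊢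
    refine ⟨Finset.sdiff_subset, ?_⟩
    rw [Finset.card_sdiff_of_subset hI.1, Finset.card_range, hI.2]
    omega
  have hinv : ∀ I ∈ (Finset.range (2*n)).powersetCard n,
      Finset.range (2*n) \ (Finset.range (2*n) \ I) = I := by
    intro I hI
    rw [Finset.mem_powersetCard] at hI
    rw [Finset.sdiff_sdiff_self_left, Finset.inter_eq_right.mpr hI.1]
  apply Finset.sum_nbij' (i := fun I => Finset.range (2*n) \ I)
    (j := fun I => Finset.range (2*n) \ I) hmem hmem hinv hinv
  intro I hI
  rw [Finset.mem_powersetCard] at hI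
  rw [cCoeff_compl n I hI.1]
  congr 1
  have hsd : ∑ k ∈ Finset.range (2*n) \ I, h k + ∑ k ∈ I, h k = 0 := by
    rw [Finset.sum_sdiff hI.1, hsum0]
  calc ∏ k ∈ I, Complex.exp (-(h k)) = Complex.exp (∑ k ∈ I, -(h k)) := (Complex.exp_sum _ _).symm
    _ = Complex.exp (∑ k ∈ Finset.range (2*n) \ I, h k) := by
        congr 1
        rw [Finset.sum_neg_distrib]
        linear_combination -hsd
    _ = ∏ k ∈ Finset.range (2*n) \ I, Complex.exp (h k) := Complex.exp_sum _ _

lemma cosh_cos (sv z : ℂ) :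
    Complex.cosh ((sv.re : ℂ) * z) * Complex.cos ((sv.im : ℂ) * z)
      = (Complex.exp (sv * z) + Complex.exp (-(sv * z))
        + Complex.exp ((starRingEnd ℂ) sv * z) + Complex.exp (-((starRingEnd ℂ) sv * z))) / 4 := by
  have hcosh : ∀ x : ℂ, Complex.cosh x = (Complex.exp x + Complex.exp (-x))/2 := fun x => rfl
  have hcos : ∀ x : ℂ, Complex.cos x
      = (Complex.exp (x * Complex.I) + Complex.exp (-x * Complex.I))/2 := fun x => rfl
  have e0 : sv = (sv.re:ℂ) + (sv.im:ℂ) * Complex.I := (Complex.re_add_im sv).symm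
  have ec : (starRingEnd ℂ) sv = (sv.re:ℂ) - (sv.im:ℂ) * Complex.I := by
    conv_lhs => rw [e0]
    rw [map_add, map_mul, Complex.conj_ofReal, Complex.conj_ofReal, Complex.conj_I]
    ring
  have e1 : sv * z = (sv.re:ℂ)*z + ((sv.im:ℂ)*z) * Complex.I := by
    conv_lhs => rw [e0]
    ring
  have e2 : (starRingEnd ℂ) sv * z = (sv.re:ℂ)*z + (-(((sv.im:ℂ)*z) * Complex.I)) := by
    rw [ec]
    ring
  have e3 : -(sv * z) = (-((sv.re:ℂ)*z)) + (-(((sv.im:ℂ)*z) * Complex.I)) := by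
    rw [e1]; ring
  have e4 : -((starRingEnd ℂ) sv * z) = (-((sv.re:ℂ)*z)) + ((sv.im:ℂ)*z) * Complex.I := by
    rw [e2]; ring
  rw [hcosh, hcos, e3, e4, e1, e2, Complex.exp_add, Complex.exp_add, Complex.exp_add,
    Complex.exp_add]
  rw [show -((sv.im:ℂ)*z) * Complex.I = -(((sv.im:ℂ)*z) * Complex.I) from by ring]
  ring


end DetAnAux

open DetAnAux in
/-- det(A_n(z)) = z^{n(2n−1)} · ∑_{I⊆{0,…,2n−1}, |I|=n} c_I cosh(α_I z) cos(β_I z),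
where α_I = Re(∑_{k∈I} ω_k) and β_I = Im(∑_{k∈I} ω_k). -/
theorem det_An (n : ℕ) (hn : 1 ≤ n) (z : ℂ) :
    (An n z).det
      = z ^ (n * (2 * n - 1)) *
          ∑ I ∈ (Finset.range (2 * n)).powersetCard n,
            cCoeff n I * Complex.cosh ((((∑ k ∈ I, omegaRoot n k).re : ℝ) : ℂ) * z) *
              Complex.cos ((((∑ k ∈ I, omegaRoot n k).im : ℝ) : ℂ) * z) := by
  rw [An]

  classical
  have hBdet : (Matrix.of (fun j k : Fin (2 * n) =>
      if (j : ℕ) < n then omegaRoot n k ^ (j : ℕ) * z ^ (j : ℕ) * Complex.exp (omegaRoot n k * z)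
      else omegaRoot n k ^ (j : ℕ) * z ^ (j : ℕ))).det
      = z ^ (n*(2*n-1)) * (Matrix.of fun j k : Fin (2*n) =>
        if (j:ℕ) < n then omegaRoot n (k:ℕ) ^ (j:ℕ) * Complex.exp (omegaRoot n (k:ℕ) * z)
        else omegaRoot n (k:ℕ) ^ (j:ℕ)).det := by
    have hA : (Matrix.of (fun j k : Fin (2 * n) =>
        if (j : ℕ) < n then omegaRoot n k ^ (j : ℕ) * z ^ (j : ℕ) * Complex.exp (omegaRoot n k * z)
        else omegaRoot n k ^ (j : ℕ) * z ^ (j : ℕ)))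
        = Matrix.of (fun j k : Fin (2*n) => (z ^ (j:ℕ)) *
          (Matrix.of (fun j' k' : Fin (2*n) =>
            if (j':ℕ) < n then omegaRoot n (k':ℕ) ^ (j':ℕ) * Complex.exp (omegaRoot n (k':ℕ) * z)
            else omegaRoot n (k':ℕ) ^ (j':ℕ)) j k)) := by
      ext j k
      simp only [Matrix.of_apply]
      by_cases hj : (j:ℕ) < n
      · rw [if_pos hj, if_pos hj]; ring
      · rw [if_neg hj, if_neg hj]; ring
    rw [hA, Matrix.det_mul_column]
    congr 1
    rw [Finset.prod_pow_eq_pow_sum]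
    congr 1
    rw [Fin.sum_univ_eq_sum_range (fun j => j) (2*n), sum_range_two_n]
  rw [hBdet]
  congr 1
  rw [det_mixed n hn (fun k => Complex.exp (omegaRoot n k * z))]
  -- the four exponential sums
  set P := (Finset.range (2*n)).powersetCard n with hP
  have h2 : ∑ I ∈ P, cCoeff n I * ∏ k ∈ I, Complex.exp (-(omegaRoot n k * z))
      = ∑ I ∈ P, cCoeff n I * ∏ k ∈ I, Complex.exp (omegaRoot n k * z) :=
    sum_prod_exp_compl n hn (fun k => omegaRoot n k * z)
      (by rw [← Finset.sum_mul, sum_omega n hn, zero_mul])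
  have h3 : ∑ I ∈ P, cCoeff n I * ∏ k ∈ I, Complex.exp ((starRingEnd ℂ) (omegaRoot n k) * z)
      = ∑ I ∈ P, cCoeff n I * ∏ k ∈ I, Complex.exp (omegaRoot n k * z) := by
    rw [← det_mixed n hn (fun k => Complex.exp ((starRingEnd ℂ) (omegaRoot n k) * z)),
      ← det_mixed n hn (fun k => Complex.exp (omegaRoot n k * z))]
    exact det_conj_matrix n hn z
  have h4 : ∑ I ∈ P, cCoeff n I * ∏ k ∈ I, Complex.exp (-((starRingEnd ℂ) (omegaRoot n k) * z))
      = ∑ I ∈ P, cCoeff n I * ∏ k ∈ I, Complex.exp ((starRingEnd ℂ) (omegaRoot n k) * z) :=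
    sum_prod_exp_compl n hn (fun k => (starRingEnd ℂ) (omegaRoot n k) * z)
      (by rw [← Finset.sum_mul, ← map_sum, sum_omega n hn, map_zero, zero_mul])
  calc ∑ I ∈ P, cCoeff n I * ∏ k ∈ I, Complex.exp (omegaRoot n k * z)
      = (∑ I ∈ P, (((cCoeff n I * ∏ k ∈ I, Complex.exp (omegaRoot n k * z)
          + cCoeff n I * ∏ k ∈ I, Complex.exp (-(omegaRoot n k * z)))
          + cCoeff n I * ∏ k ∈ I, Complex.exp ((starRingEnd ℂ) (omegaRoot n k) * z))
          + cCoeff n I * ∏ k ∈ I, Complex.exp (-((starRingEnd ℂ) (omegaRoot n k) * z)))) / 4 := by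
        rw [Finset.sum_add_distrib, Finset.sum_add_distrib, Finset.sum_add_distrib,
          h2, h3, h4, h3]
        ring
    _ = ∑ I ∈ P, cCoeff n I
          * Complex.cosh ((((∑ k ∈ I, omegaRoot n k).re : ℝ) : ℂ) * z)
          * Complex.cos ((((∑ k ∈ I, omegaRoot n k).im : ℝ) : ℂ) * z) := by
        rw [Finset.sum_div]
        apply Finset.sum_congr rfl
        intro I hI
        rw [mul_assoc, cosh_cos (∑ k ∈ I, omegaRoot n k) z]
        have p1 : Complex.exp ((∑ k ∈ I, omegaRoot n k) * z)
            = ∏ k ∈ I, Complex.exp (omegaRoot n k * z) := by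
          rw [Finset.sum_mul, Complex.exp_sum]
        have p2 : Complex.exp (-((∑ k ∈ I, omegaRoot n k) * z))
            = ∏ k ∈ I, Complex.exp (-(omegaRoot n k * z)) := by
          rw [Finset.sum_mul, ← Complex.exp_sum]
          congr 1
          rw [Finset.sum_neg_distrib]
        have p3 : Complex.exp ((starRingEnd ℂ) (∑ k ∈ I, omegaRoot n k) * z)
            = ∏ k ∈ I, Complex.exp ((starRingEnd ℂ) (omegaRoot n k) * z) := by
          rw [map_sum, Finset.sum_mul, Complex.exp_sum]
        have p4 : Complex.exp (-((starRingEnd ℂ) (∑ k ∈ I, omegaRoot n k) * z))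
            = ∏ k ∈ I, Complex.exp (-((starRingEnd ℂ) (omegaRoot n k) * z)) := by
          rw [map_sum, Finset.sum_mul, ← Complex.exp_sum]
          congr 1
          rw [Finset.sum_neg_distrib]
        rw [p1, p2, p3, p4]
        ring
end

section
/- Let n ≥ 1 be an integer. If n is even, then ∑_{k=−n/2+1}^{n/2} exp(iπk/n) = i + cot(π/(2n)); if n is odd, then ∑_{k=−(n−1)/2}^{(n−1)/2} exp(iπ(2k+1)/(2n)) = i + cot(π/(2n)). In other words, the sum of i together with all the numbers ω_k = exp(iπ(2k + (n mod 2))/(2n)), k ∈ {0,…,2n−1}, having strictly positive real part equals i + cot(π/(2n)). -/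
open Real Complex Finset

lemma exp_half_pi (θ : ℝ) (hθ : θ = π/2) : Complex.exp ((θ:ℂ) * Complex.I) = Complex.I := by
  subst hθ
  rw [Complex.exp_mul_I]
  push_cast
  rw [Complex.cos_pi_div_two, Complex.sin_pi_div_two]
  ring

lemma core_sum (n : ℕ) (hn : 1 ≤ n) :
    ∑ t ∈ Finset.range n, Complex.exp (Complex.I * (π:ℂ) * (2*(t:ℂ) + 2 - (n:ℂ)) / (2*(n:ℂ)))
      = Complex.I + ((Real.cot (π/(2*n)) : ℝ) : ℂ) := by
  have hn0 : (n:ℝ) ≠ 0 := Nat.cast_ne_zero.mpr (by omega)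
  have hnC : (n:ℂ) ≠ 0 := Nat.cast_ne_zero.mpr (by omega)
  set θ : ℝ := π/(2*n) with hθ
  have hnpos : (0:ℝ) < n := by positivity
  have hθpos : 0 < θ := by positivity
  have hθlt : θ < π := by
    rw [hθ, div_lt_iff₀ (by positivity)]
    nlinarith [Real.pi_pos, (by exact_mod_cast hn : (1:ℝ) ≤ n)]
  have hsin : Real.sin θ ≠ 0 := ne_of_gt (Real.sin_pos_of_pos_of_lt_pi hθpos hθlt)
  have hθC : ((θ:ℝ):ℂ) = (π:ℂ)/(2*(n:ℂ)) := by rw [hθ]; push_cast; ring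
  have hne1 : Complex.exp (2*(θ:ℂ)*Complex.I) ≠ 1 := by
    intro hone
    rw [Complex.exp_eq_one_iff] at hone
    obtain ⟨k, hk⟩ := hone
    have h1 : ((2*θ : ℝ) : ℂ) = ((k * (2*π) : ℝ) : ℂ) := by
      apply mul_right_cancel₀ Complex.I_ne_zero
      push_cast
      linear_combination hk
    have h2 : (2*θ : ℝ) = k * (2*π) := by exact_mod_cast h1
    have hkpos : (0:ℝ) < k := by nlinarith [Real.pi_pos]
    have hklt : (k:ℝ) < 1 := by nlinarith [Real.pi_pos]
    have hk1 : (0:ℤ) < k := by exact_mod_cast hkpos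
    have hk2 : (k:ℤ) < 1 := by exact_mod_cast hklt
    omega
  have hterm : ∀ t : ℕ, Complex.I * (π:ℂ) * (2*(t:ℂ) + 2 - (n:ℂ)) / (2*(n:ℂ))
      = (t:ℂ) * (2*(θ:ℂ)*Complex.I) + ((2 - (n:ℂ)) * ((θ:ℂ)*Complex.I)) := by
    intro t
    rw [hθC]
    field_simp
    ring
  simp only [hterm, Complex.exp_add, Complex.exp_nat_mul]
  rw [← Finset.sum_mul, geom_sum_eq hne1]
  have hw : Complex.exp (2*(θ:ℂ)*Complex.I) ^ n = -1 := by
    rw [← Complex.exp_nat_mul]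
    have : (n:ℂ) * (2*(θ:ℂ)*Complex.I) = (π:ℂ) * Complex.I := by
      rw [hθC]; field_simp
    rw [this, Complex.exp_pi_mul_I]
  rw [hw]
  set a : ℂ := Complex.exp ((θ:ℂ)*Complex.I) with ha
  set b : ℂ := Complex.exp (-(θ:ℂ)*Complex.I) with hb
  have hab : a * b = 1 := by
    rw [ha, hb, ← Complex.exp_add]; ring_nf; exact Complex.exp_zero
  have hbn : b ^ n = - Complex.I := by
    rw [hb, ← Complex.exp_nat_mul]
    have h1 : (n:ℂ) * (-(θ:ℂ)*Complex.I) = -(((θ*n :ℝ):ℂ) * Complex.I) := by push_cast; ring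
    have h3 : θ * n = π/2 := by rw [hθ]; field_simp
    rw [h1, Complex.exp_neg, h3, exp_half_pi _ rfl, Complex.inv_I]
  have hC : Complex.exp ((2 - (n:ℂ)) * ((θ:ℂ)*Complex.I)) = a^2 * (-Complex.I) := by
    have h4 : (2 - (n:ℂ)) * ((θ:ℂ)*Complex.I) = ((θ:ℂ)*Complex.I) + ((θ:ℂ)*Complex.I) + (n:ℂ)*(-(θ:ℂ)*Complex.I) := by ring
    rw [h4, Complex.exp_add, Complex.exp_add, Complex.exp_nat_mul, ← hb, ← ha, hbn]
    ring
  have hw2 : Complex.exp (2*(θ:ℂ)*Complex.I) = a^2 := by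
    rw [ha, sq, ← Complex.exp_add]; ring_nf
  rw [hC, hw2]
  have hcot : ((Real.cot θ : ℝ):ℂ) = Complex.cos (θ:ℂ) / Complex.sin (θ:ℂ) := by
    rw [Real.cot_eq_cos_div_sin]; push_cast [Complex.ofReal_cos, Complex.ofReal_sin]; ring
  rw [hcot]
  have hcos : Complex.cos (θ:ℂ) = (a + b)/2 := by rw [Complex.cos, ← ha, ← hb]
  have hsinC : Complex.sin (θ:ℂ) = (b - a) * Complex.I / 2 := by rw [Complex.sin, ← ha, ← hb]
  have hsinne : Complex.sin (θ:ℂ) ≠ 0 := by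
    rw [← Complex.ofReal_sin]
    exact Complex.ofReal_ne_zero.mpr hsin
  have hba : b - a ≠ 0 := by
    intro h
    apply hsinne
    rw [hsinC, h]; ring
  have ha0 : a ≠ 0 := Complex.exp_ne_zero _
  have ha21 : a^2 - 1 ≠ 0 := sub_ne_zero.mpr (hw2 ▸ hne1)
  have key : a^2 - 1 = a * (a - b) := by linear_combination hab
  rw [hcos, hsinC, key]
  have hab' : a - b ≠ 0 := by intro h; apply hba; linear_combination -h
  field_simp
  ring_nf
  linear_combination (b^2 - a^2) * Complex.I_sq

lemma sum_Icc_int (f : ℤ → ℂ) (a : ℤ) (n : ℕ) :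
    ∑ k ∈ Finset.Icc a (a + n - 1), f k = ∑ t ∈ Finset.range n, f (a + t) := by
  refine Finset.sum_nbij' (fun k => (k - a).toNat) (fun t => a + (t:ℤ)) ?_ ?_ ?_ ?_ ?_
  all_goals intro x hx
  · simp only [Finset.mem_Icc] at hx; simp only [Finset.mem_range]; omega
  · simp only [Finset.mem_range] at hx; simp only [Finset.mem_Icc]; omega
  · simp only [Finset.mem_Icc] at hx; omega
  · simp only [Finset.mem_range] at hx; omega
  · simp only [Finset.mem_Icc] at hx; congr 1; omega

lemma exp_top (n : ℕ) (hn : 1 ≤ n) :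
    Complex.exp (Complex.I * (π:ℂ) * (2*(((n-1:ℕ)):ℂ) + 2 - (n:ℂ)) / (2*(n:ℂ))) = Complex.I := by
  have hnC : (n:ℂ) ≠ 0 := Nat.cast_ne_zero.mpr (by omega)
  have h1 : ((n-1:ℕ):ℂ) = (n:ℂ) - 1 := by push_cast [Nat.cast_sub hn]; ring
  rw [show Complex.I * (π:ℂ) * (2*(((n-1:ℕ)):ℂ) + 2 - (n:ℂ)) / (2*(n:ℂ))
      = ((π/2 : ℝ):ℂ) * Complex.I from by rw [h1]; push_cast; field_simp; ring]
  exact exp_half_pi _ rfl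

/-- If n is even then ∑_{k=−n/2+1}^{n/2} exp(iπk/n) = i + cot(π/(2n)); if n is odd then
∑_{k=−(n−1)/2}^{(n−1)/2} exp(iπ(2k+1)/(2n)) = i + cot(π/(2n)).  In other words, the sum
of i together with all the ω_k, k ∈ {0,…,2n−1}, having strictly positive real part
equals i + cot(π/(2n)). -/
theorem dominant_root_sum (n : ℕ) (hn : 1 ≤ n) :
    (Even n →
      ∑ k ∈ Finset.Icc (-(n : ℤ) / 2 + 1) ((n : ℤ) / 2),
          Complex.exp (Complex.I * (Real.pi : ℂ) * (k : ℂ) / (n : ℂ))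
        = Complex.I + ((Real.cot (π / (2 * n)) : ℝ) : ℂ)) ∧
    (Odd n →
      ∑ k ∈ Finset.Icc (-(((n : ℤ) - 1) / 2)) (((n : ℤ) - 1) / 2),
          Complex.exp (Complex.I * (Real.pi : ℂ) * (2 * (k : ℂ) + 1) / (2 * (n : ℂ)))
        = Complex.I + ((Real.cot (π / (2 * n)) : ℝ) : ℂ)) ∧
    (Complex.I + ∑ k ∈ (Finset.range (2 * n)).filter (fun k => 0 < (omegaRoot n k).re),
        omegaRoot n k
      = Complex.I + ((Real.cot (π / (2 * n)) : ℝ) : ℂ)) := by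
  have hcore := core_sum n hn
  have hI := exp_top n hn
  refine ⟨?_, ?_, ?_⟩
  · -- even case
    intro he
    obtain ⟨m, hm⟩ := he
    have hm' : n = 2*m := by omega
    have h1 : (-(n : ℤ) / 2 + 1) = -(m:ℤ) + 1 := by omega
    have h2 : ((n:ℤ)/2) = (-(m:ℤ)+1) + n - 1 := by omega
    rw [h1, h2, sum_Icc_int, ← hcore]
    apply Finset.sum_congr rfl
    intro t ht
    congr 1
    have hmC : (m:ℂ) ≠ 0 := Nat.cast_ne_zero.mpr (by omega)
    have hmc : (n:ℂ) = 2*(m:ℂ) := by exact_mod_cast congrArg (Nat.cast : ℕ → ℂ) hm'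
    push_cast
    rw [hmc]
    field_simp
    ring
  · -- odd case
    intro ho
    obtain ⟨m, hm⟩ := ho
    have h1 : (-(((n:ℤ) - 1) / 2)) = -(m:ℤ) := by omega
    have h2 : (((n:ℤ) - 1)/2) = (-(m:ℤ)) + n - 1 := by omega
    rw [h1, h2, sum_Icc_int, ← hcore]
    apply Finset.sum_congr rfl
    intro t ht
    congr 1
    have hnC : (n:ℂ) ≠ 0 := Nat.cast_ne_zero.mpr (by omega)
    have hmc : (n:ℂ) = 2*(m:ℂ)+1 := by exact_mod_cast congrArg (Nat.cast : ℕ → ℂ) hm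
    push_cast
    rw [div_eq_div_iff (by simpa using hnC) (by simpa using hnC)]
    linear_combination (2*Complex.I * (π:ℂ) * (n:ℂ)) * hmc
  · -- filtered case
    set r := n % 2 with hr
    set m := n / 2 with hm
    have hnmr : n = 2*m + r := by omega
    have hr2 : r < 2 := by omega
    have hmr1 : 1 ≤ m + r := by omega
    have hnR : (0:ℝ) < n := by exact_mod_cast hn
    have hnC : (n:ℂ) ≠ 0 := Nat.cast_ne_zero.mpr (by omega)
    have hncC : (n:ℂ) = 2*(m:ℂ) + (r:ℂ) := by exact_mod_cast congrArg (Nat.cast : ℕ → ℂ) hnmr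
    set c : ℝ := π/(2*n) with hc
    have hcpos : 0 < c := by positivity
    have hnc : (n:ℝ) * c = π/2 := by rw [hc]; field_simp
    have hre : ∀ k : ℕ, (omegaRoot n k).re = Real.cos ((2*(k:ℝ) + r) * c) := by
      intro k
      unfold omegaRoot
      rw [show Complex.I * (π:ℂ) * (2 * (k : ℂ) + ((n % 2 : ℕ) : ℂ)) / (2 * (n : ℂ))
          = (((2*(k:ℝ) + r) * c : ℝ) : ℂ) * Complex.I from by
        rw [hc, ← hr]; push_cast; ring]
      exact Complex.exp_ofReal_mul_I_re _
    have hfilt : (Finset.range (2 * n)).filter (fun k => 0 < (omegaRoot n k).re)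
        = Finset.range m ∪ Finset.Icc (3*m+r+1) (2*n-1) := by
      ext k
      simp only [Finset.mem_filter, Finset.mem_range, Finset.mem_union, Finset.mem_Icc, hre]
      constructor
      · rintro ⟨hk2n, hkpos⟩
        by_contra hcon
        push_neg at hcon
        obtain ⟨h1, h2⟩ := hcon
        have hk3 : k ≤ 3*m+r := by omega
        have hkm : m ≤ k := by omega
        have hle : Real.cos ((2*(k:ℝ)+r)*c) ≤ 0 := by
          apply Real.cos_nonpos_of_pi_div_two_le_of_le
          · rw [← hnc]
            have : (n:ℝ) ≤ 2*(k:ℝ)+r := by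
              have : (n:ℕ) ≤ 2*k+r := by omega
              exact_mod_cast this
            nlinarith
          · have h3 : 2*(k:ℝ)+r ≤ 3*(n:ℝ) := by
              have : 2*k+r ≤ 3*n := by omega
              exact_mod_cast this
            have : (2*(k:ℝ)+r)*c ≤ 3*((n:ℝ)*c) := by nlinarith
            rw [hnc] at this
            linarith
        linarith
      · rintro (hkm | ⟨hk1, hk2⟩)
        · constructor
          · omega
          · apply Real.cos_pos_of_mem_Ioo
            constructor
            · have : (0:ℝ) ≤ (2*(k:ℝ)+r)*c := by positivity
              have hπ : 0 < π/2 := by positivity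
              linarith
            · rw [← hnc]
              have : 2*(k:ℝ)+r < (n:ℝ) := by
                have : 2*k+r < n := by omega
                exact_mod_cast this
              nlinarith
        · refine ⟨by omega, ?_⟩
          rw [show (2*(k:ℝ)+r)*c = ((2*(k:ℝ)+r)*c - 2*π) + 2*π by ring,
              Real.cos_add_two_pi]
          apply Real.cos_pos_of_mem_Ioo
          have h2π : 2*π = 4*((n:ℝ)*c) := by rw [hnc]; ring
          constructor
          · rw [h2π, ← hnc]
            have : 3*(n:ℝ) < 2*(k:ℝ)+r := by
              have : 3*n < 2*k+r := by omega
              exact_mod_cast this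
            nlinarith
          · rw [h2π, ← hnc]
            have : 2*(k:ℝ)+r < 5*(n:ℝ) := by
              have : 2*k+r < 5*n := by omega
              exact_mod_cast this
            nlinarith
    rw [hfilt, Finset.sum_union (by
      rw [Finset.disjoint_left]
      intro k hk hk'
      simp only [Finset.mem_range] at hk
      simp only [Finset.mem_Icc] at hk'
      omega)]
    rw [← hcore]
    have hrange : Finset.range n = Finset.range ((m+r-1)+m+1) := by congr 1; omega
    rw [hrange, Finset.sum_range_succ, Finset.sum_range_add,
      show (m+r-1)+m = n-1 from by omega, hI]
    have hB : ∀ t : ℕ, Complex.exp (Complex.I * (π:ℂ) * (2*(((m+r-1+t : ℕ)):ℂ) + 2 - (n:ℂ)) / (2*(n:ℂ)))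
        = omegaRoot n t := by
      intro t
      unfold omegaRoot
      rw [← hr]
      congr 1
      have hcst : ((m+r-1+t : ℕ):ℂ) = (m:ℂ)+(r:ℂ)-1+(t:ℂ) := by
        have : m+r-1+t = m+r+t-1 := by omega
        rw [this]
        have h1 : 1 ≤ m+r+t := by omega
        push_cast [Nat.cast_sub h1]
        ring
      rw [hcst]
      rw [div_eq_div_iff (by simpa using hnC) (by simpa using hnC)]
      linear_combination (-2*Complex.I*(π:ℂ)*(n:ℂ)) * hncC
    have hC : ∑ k ∈ Finset.Icc (3*m+r+1) (2*n-1), omegaRoot n k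
        = ∑ t ∈ Finset.range (m+r-1), Complex.exp (Complex.I * (π:ℂ) * (2*(t:ℂ) + 2 - (n:ℂ)) / (2*(n:ℂ))) := by
      rw [← Finset.Ico_add_one_right_eq_Icc, Finset.sum_Ico_eq_sum_range]
      have : 2*n-1+1 - (3*m+r+1) = m+r-1 := by omega
      rw [this]
      apply Finset.sum_congr rfl
      intro t ht
      unfold omegaRoot
      rw [← hr]
      have harg : Complex.I * (π:ℂ) * (2*(((3*m+r+1+t : ℕ)):ℂ) + (r:ℂ)) / (2*(n:ℂ))
          = Complex.I * (π:ℂ) * (2*(t:ℂ) + 2 - (n:ℂ)) / (2*(n:ℂ)) + 2*(π:ℂ)*Complex.I := by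
        rw [div_add' _ _ _ (by simpa using hnC), div_eq_div_iff (by simpa using hnC) (by simpa using hnC)]
        push_cast
        linear_combination (-6*Complex.I*(π:ℂ)*(n:ℂ)) * hncC
      rw [harg, Complex.exp_add, Complex.exp_two_pi_mul_I, mul_one]
    rw [hC]
    simp only [hB]
    ring
end
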